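/- arXiv:1012.4047 — 6 statements merged into one kernel-verified Lean document; each statement's English description precedes it below -/
import Mathlib

section
/- Let b be a nonnegative even integer and let k and m be positive integers with m ≥ 3. Then E_{2^m k + b} ≡ E_b + 5·2^m k (mod 2^{m+3}). -/
open Finset

def eulerE : ℕ → ℤ
  | 0 => 1
  | 1 => 0
  | n + 2 =>
      if Even n then
        -∑ r ∈ (Finset.range (n / 2 + 1)).attach,
          ((n + 2).choose (2 * r.1) : ℤ) * eulerE (2 * r.1)
      else 0
  decreasing_by
    have := r.2
    simp only [Finset.mem_range] at this
    omega

namespace SternAux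

def e (n : ℕ) : ℤ := eulerE (2 * n)

lemma eulerE_rec (n : ℕ) : eulerE (2*n+2) =
    -∑ r ∈ Finset.range (n+1), ((2*n+2).choose (2*r) : ℤ) * eulerE (2*r) := by
  rw [show 2*n+2 = (2*n)+2 by ring, eulerE, if_pos (even_two_mul n)]
  rw [show 2*n/2 = n from Nat.mul_div_cancel_left _ (by norm_num)]
  rw [← Finset.sum_attach (Finset.range (n+1)) (fun r => ((2*n+2).choose (2*r) : ℤ) * eulerE (2*r))]

lemma e_rec (n : ℕ) : e (n+1) =
    -∑ r ∈ Finset.range (n+1), (((2*n+2).choose (2*r) : ℤ)) * e r := by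
  have := eulerE_rec n
  simpa [e, Nat.mul_add] using this

def A (j : ℕ) : ℤ := ∑ i ∈ Finset.range (j+1), (-1:ℤ)^(j-i) * (j.choose i) * e i

/-- Newton expansion (binomial inversion). -/
lemma e_eq_sum_A (n : ℕ) : e n = ∑ j ∈ Finset.range (n+1), (n.choose j : ℤ) * A j := by
  have hA : ∀ j ∈ Finset.range (n+1), (n.choose j : ℤ) * A j
      = ∑ i ∈ Finset.range (n+1), (n.choose j : ℤ) * ((-1:ℤ)^(j-i) * (j.choose i) * e i) := by
    intro j hj
    simp only [Finset.mem_range] at hj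
    rw [A, Finset.mul_sum]
    apply Finset.sum_subset
    · intro x hx; simp only [Finset.mem_range] at *; omega
    · intro x _ hx
      simp only [Finset.mem_range, not_lt] at hx
      have : j.choose x = 0 := Nat.choose_eq_zero_of_lt (by omega)
      simp [this]
  rw [Finset.sum_congr rfl hA, Finset.sum_comm]
  have hinner : ∀ i ∈ Finset.range (n+1),
      ∑ j ∈ Finset.range (n+1), (n.choose j : ℤ) * ((-1:ℤ)^(j-i) * (j.choose i) * e i)
      = (if i = n then 1 else 0) * e i := by
    intro i hi
    simp only [Finset.mem_range] at hi
    have hi' : i ≤ n := by omega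
    rw [Finset.range_eq_Ico, ← Finset.sum_Ico_consecutive _ (Nat.zero_le i) (by omega : i ≤ n+1)]
    have hz : ∑ j ∈ Finset.Ico 0 i, (n.choose j : ℤ) * ((-1:ℤ)^(j-i) * (j.choose i) * e i) = 0 := by
      apply Finset.sum_eq_zero
      intro j hj
      simp only [Finset.mem_Ico] at hj
      have : j.choose i = 0 := Nat.choose_eq_zero_of_lt (by omega)
      simp [this]
    rw [hz, zero_add, Finset.sum_Ico_eq_sum_range]
    have hterm : ∀ l ∈ Finset.range (n+1-i),
        (n.choose (i+l) : ℤ) * ((-1:ℤ)^((i+l)-i) * ((i+l).choose i) * e i)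
        = ((n.choose i : ℤ) * e i) * ((-1:ℤ)^l * ((n-i).choose l)) := by
      intro l hl
      simp only [Finset.mem_range] at hl
      have h1 : (i+l) - i = l := by omega
      have h2 : n.choose (i+l) * (i+l).choose i = n.choose i * (n-i).choose l := by
        have := Nat.choose_mul (n := n) (show i ≤ i+l by omega)
        simpa using this
      have h2' : (n.choose (i+l) : ℤ) * ((i+l).choose i : ℤ)
          = (n.choose i : ℤ) * ((n-i).choose l : ℤ) := by exact_mod_cast h2
      rw [h1]
      linear_combination ((-1:ℤ)^l * e i) * h2'
    rw [Finset.sum_congr rfl hterm, ← Finset.mul_sum]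
    have : n+1-i = (n-i)+1 := by omega
    rw [this, Int.alternating_sum_range_choose]
    by_cases h : i = n
    · simp [h]
    · have : n - i ≠ 0 := by omega
      simp [h, this]
  rw [Finset.sum_congr rfl hinner]
  rw [Finset.sum_eq_single_of_mem n (by simp)]
  · simp
  · intro b _ hb; simp [hb]

def c (n j : ℕ) : ℤ := ∑ i ∈ Finset.range (n+1), ((2*n).choose (2*i) : ℤ) * (i.choose j : ℤ)
def d (n j : ℕ) : ℤ := ∑ i ∈ Finset.range (n+1), ((2*n).choose (2*i+1) : ℤ) * (i.choose j : ℤ)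

lemma choose_add_two (m k : ℕ) : (m+2).choose (k+2)
    = m.choose k + 2 * m.choose (k+1) + m.choose (k+2) := by
  simp [Nat.choose_succ_succ]; ring

lemma shift_c (n j : ℕ) :
    ∑ i ∈ Finset.range (n+1), ((2*n).choose (2*i+2) : ℤ) * ((i+1).choose j : ℤ)
      = c n j - ((0:ℕ).choose j : ℤ) := by
  have h : c n j = ∑ i ∈ Finset.range (n+2), ((2*n).choose (2*i) : ℤ) * (i.choose j : ℤ) := by
    rw [Finset.sum_range_succ]
    have h0 : (2*n).choose (2*(n+1)) = 0 := Nat.choose_eq_zero_of_lt (by omega)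
    simp [c, h0]
  rw [h, Finset.sum_range_succ' (fun i => ((2*n).choose (2*i) : ℤ) * (i.choose j : ℤ)) (n+1)]
  have : ∀ i, ((2*n).choose (2*(i+1)) : ℤ) * ((i+1).choose j : ℤ)
      = ((2*n).choose (2*i+2) : ℤ) * ((i+1).choose j : ℤ) := by
    intro i; norm_num [Nat.mul_add]
  rw [Finset.sum_congr rfl (fun i _ => this i)]
  simp

lemma shift_d (n j : ℕ) :
    ∑ i ∈ Finset.range (n+1), ((2*n).choose (2*i+3) : ℤ) * ((i+1).choose j : ℤ)
      = d n j - (2*n : ℤ) * ((0:ℕ).choose j : ℤ) := by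
  have h : d n j = ∑ i ∈ Finset.range (n+2), ((2*n).choose (2*i+1) : ℤ) * (i.choose j : ℤ) := by
    rw [Finset.sum_range_succ]
    have h0 : (2*n).choose (2*(n+1)+1) = 0 := Nat.choose_eq_zero_of_lt (by omega)
    simp [d, h0]
  rw [h, Finset.sum_range_succ' (fun i => ((2*n).choose (2*i+1) : ℤ) * (i.choose j : ℤ)) (n+1)]
  have : ∀ i, ((2*n).choose (2*(i+1)+1) : ℤ) * ((i+1).choose j : ℤ)
      = ((2*n).choose (2*i+3) : ℤ) * ((i+1).choose j : ℤ) := by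
    intro i; norm_num [Nat.mul_add]
  rw [Finset.sum_congr rfl (fun i _ => this i)]
  simp [Nat.choose_one_right]

lemma c_rec_zero (n : ℕ) : c (n+1) 0 = 2 * c n 0 + 2 * d n 0 := by
  have hpeel : c (n+1) 0
      = ∑ i ∈ Finset.range (n+1), ((2*(n+1)).choose (2*(i+1)) : ℤ) * (((i+1).choose 0 : ℕ) : ℤ)
        + ((2*(n+1)).choose (2*0) : ℤ) * (((0:ℕ).choose 0 : ℕ) : ℤ) :=
    Finset.sum_range_succ' (fun i => ((2*(n+1)).choose (2*i) : ℤ) * ((i.choose 0 : ℕ) : ℤ)) (n+1)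
  rw [hpeel]
  have hterm : ∀ i, ((2*(n+1)).choose (2*(i+1)) : ℤ) * (((i+1).choose 0 : ℕ) : ℤ)
      = ((2*n).choose (2*i) : ℤ) * ((i.choose 0 : ℕ) : ℤ)
        + 2 * (((2*n).choose (2*i+1) : ℤ) * ((i.choose 0 : ℕ) : ℤ))
        + ((2*n).choose (2*i+2) : ℤ) * (((i+1).choose 0 : ℕ) : ℤ) := by
    intro i
    rw [show 2*(n+1) = 2*n+2 by ring, show 2*(i+1) = 2*i+2 by ring, choose_add_two]
    push_cast
    simp [Nat.choose_zero_right]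
  rw [Finset.sum_congr rfl (fun i _ => hterm i), Finset.sum_add_distrib,
    Finset.sum_add_distrib, shift_c n 0]
  have : ∑ i ∈ Finset.range (n+1), 2 * (((2*n).choose (2*i+1) : ℤ) * ((i.choose 0 : ℕ) : ℤ))
      = 2 * d n 0 := by rw [← Finset.mul_sum]; rfl
  rw [this]
  show c n 0 + 2 * d n 0 + (c n 0 - 1) + 1 * 1 = 2 * c n 0 + 2 * d n 0
  ring

lemma d_rec_zero (n : ℕ) : d (n+1) 0 = 2 * c n 0 + 2 * d n 0 := by
  have hpeel : d (n+1) 0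
      = ∑ i ∈ Finset.range (n+1), ((2*(n+1)).choose (2*(i+1)+1) : ℤ) * (((i+1).choose 0 : ℕ) : ℤ)
        + ((2*(n+1)).choose (2*0+1) : ℤ) * (((0:ℕ).choose 0 : ℕ) : ℤ) :=
    Finset.sum_range_succ' (fun i => ((2*(n+1)).choose (2*i+1) : ℤ) * ((i.choose 0 : ℕ) : ℤ)) (n+1)
  rw [hpeel]
  have hterm : ∀ i, ((2*(n+1)).choose (2*(i+1)+1) : ℤ) * (((i+1).choose 0 : ℕ) : ℤ)
      = ((2*n).choose (2*i+1) : ℤ) * ((i.choose 0 : ℕ) : ℤ)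
        + 2 * (((2*n).choose (2*i+2) : ℤ) * (((i+1).choose 0 : ℕ) : ℤ))
        + ((2*n).choose (2*i+3) : ℤ) * (((i+1).choose 0 : ℕ) : ℤ) := by
    intro i
    rw [show 2*(n+1) = 2*n+2 by ring, show 2*(i+1)+1 = (2*i+1)+2 by ring, choose_add_two]
    push_cast
    simp [Nat.choose_zero_right]
  rw [Finset.sum_congr rfl (fun i _ => hterm i), Finset.sum_add_distrib,
    Finset.sum_add_distrib, shift_d n 0]
  have h2 : ∑ i ∈ Finset.range (n+1), 2 * (((2*n).choose (2*i+2) : ℤ) * (((i+1).choose 0 : ℕ) : ℤ))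
      = 2 * (c n 0 - 1) := by rw [← Finset.mul_sum, shift_c n 0]; simp
  rw [h2]
  have h3 : ∑ i ∈ Finset.range (n+1), ((2*n).choose (2*i+1) : ℤ) * ((i.choose 0 : ℕ) : ℤ) = d n 0 := rfl
  rw [h3]
  simp [Nat.choose_one_right]
  ring

lemma c_rec (n j : ℕ) :
    c (n+1) (j+1) = c n j + 2 * c n (j+1) + 2 * d n j + 2 * d n (j+1) := by
  have hpeel : c (n+1) (j+1)
      = ∑ i ∈ Finset.range (n+1), ((2*(n+1)).choose (2*(i+1)) : ℤ) * (((i+1).choose (j+1) : ℕ) : ℤ)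
        + ((2*(n+1)).choose (2*0) : ℤ) * (((0:ℕ).choose (j+1) : ℕ) : ℤ) :=
    Finset.sum_range_succ' (fun i => ((2*(n+1)).choose (2*i) : ℤ) * ((i.choose (j+1) : ℕ) : ℤ)) (n+1)
  rw [hpeel]
  have hterm : ∀ i, ((2*(n+1)).choose (2*(i+1)) : ℤ) * (((i+1).choose (j+1) : ℕ) : ℤ)
      = ((2*n).choose (2*i) : ℤ) * ((i.choose j : ℕ) : ℤ)
        + ((2*n).choose (2*i) : ℤ) * ((i.choose (j+1) : ℕ) : ℤ)
        + 2 * (((2*n).choose (2*i+1) : ℤ) * ((i.choose j : ℕ) : ℤ))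
        + 2 * (((2*n).choose (2*i+1) : ℤ) * ((i.choose (j+1) : ℕ) : ℤ))
        + ((2*n).choose (2*i+2) : ℤ) * (((i+1).choose (j+1) : ℕ) : ℤ) := by
    intro i
    rw [show 2*(n+1) = 2*n+2 by ring, show 2*(i+1) = 2*i+2 by ring, choose_add_two,
      Nat.choose_succ_succ i j]
    push_cast
    ring
  rw [Finset.sum_congr rfl (fun i _ => hterm i), Finset.sum_add_distrib,
    Finset.sum_add_distrib, Finset.sum_add_distrib, Finset.sum_add_distrib, shift_c n (j+1)]
  have h1 : ∑ i ∈ Finset.range (n+1), ((2*n).choose (2*i) : ℤ) * ((i.choose j : ℕ) : ℤ) = c n j := rfl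
  have h2 : ∑ i ∈ Finset.range (n+1), ((2*n).choose (2*i) : ℤ) * ((i.choose (j+1) : ℕ) : ℤ) = c n (j+1) := rfl
  have h3 : ∑ i ∈ Finset.range (n+1), 2 * (((2*n).choose (2*i+1) : ℤ) * ((i.choose j : ℕ) : ℤ))
      = 2 * d n j := by rw [← Finset.mul_sum]; rfl
  have h4 : ∑ i ∈ Finset.range (n+1), 2 * (((2*n).choose (2*i+1) : ℤ) * ((i.choose (j+1) : ℕ) : ℤ))
      = 2 * d n (j+1) := by rw [← Finset.mul_sum]; rfl
  rw [h1, h2, h3, h4]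
  simp
  ring

lemma d_rec (n j : ℕ) :
    d (n+1) (j+1) = d n j + 2 * d n (j+1) + 2 * c n (j+1) := by
  have hpeel : d (n+1) (j+1)
      = ∑ i ∈ Finset.range (n+1), ((2*(n+1)).choose (2*(i+1)+1) : ℤ) * (((i+1).choose (j+1) : ℕ) : ℤ)
        + ((2*(n+1)).choose (2*0+1) : ℤ) * (((0:ℕ).choose (j+1) : ℕ) : ℤ) :=
    Finset.sum_range_succ' (fun i => ((2*(n+1)).choose (2*i+1) : ℤ) * ((i.choose (j+1) : ℕ) : ℤ)) (n+1)
  rw [hpeel]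
  have hterm : ∀ i, ((2*(n+1)).choose (2*(i+1)+1) : ℤ) * (((i+1).choose (j+1) : ℕ) : ℤ)
      = ((2*n).choose (2*i+1) : ℤ) * ((i.choose j : ℕ) : ℤ)
        + ((2*n).choose (2*i+1) : ℤ) * ((i.choose (j+1) : ℕ) : ℤ)
        + 2 * (((2*n).choose (2*i+2) : ℤ) * (((i+1).choose (j+1) : ℕ) : ℤ))
        + ((2*n).choose (2*i+3) : ℤ) * (((i+1).choose (j+1) : ℕ) : ℤ) := by
    intro i
    rw [show 2*(n+1) = 2*n+2 by ring, show 2*(i+1)+1 = (2*i+1)+2 by ring, choose_add_two]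
    push_cast [Nat.choose_succ_succ i j]
    ring
  rw [Finset.sum_congr rfl (fun i _ => hterm i), Finset.sum_add_distrib,
    Finset.sum_add_distrib, Finset.sum_add_distrib, shift_d n (j+1)]
  have h1 : ∑ i ∈ Finset.range (n+1), ((2*n).choose (2*i+1) : ℤ) * ((i.choose j : ℕ) : ℤ) = d n j := rfl
  have h2 : ∑ i ∈ Finset.range (n+1), ((2*n).choose (2*i+1) : ℤ) * ((i.choose (j+1) : ℕ) : ℤ) = d n (j+1) := rfl
  have h3 : ∑ i ∈ Finset.range (n+1), 2 * (((2*n).choose (2*i+2) : ℤ) * (((i+1).choose (j+1) : ℕ) : ℤ))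
      = 2 * (c n (j+1) - ((0:ℕ).choose (j+1) : ℤ)) := by rw [← Finset.mul_sum, shift_c n (j+1)]
  rw [h1, h2, h3]
  simp
  ring

lemma cd_dvd (n : ℕ) : ∀ j, (2:ℤ)^(n-j) ∣ c n j ∧ (2:ℤ)^(n-j) ∣ d n j := by
  induction n with
  | zero => intro j; simp
  | succ n ih =>
    intro j
    have key : ∀ (j' : ℕ) (x : ℤ), (2:ℤ)^(n-j') ∣ x → (2:ℤ)^(n+1-j') ∣ 2 * x := by
      intro j' x hx
      have h1 : n+1-j' ≤ 1 + (n - j') := by omega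
      calc (2:ℤ)^(n+1-j') ∣ 2^(1+(n-j')) := pow_dvd_pow 2 h1
        _ = 2 * 2^(n-j') := by rw [pow_add, pow_one]
        _ ∣ 2 * x := mul_dvd_mul_left 2 hx
    match j with
    | 0 =>
      refine ⟨?_, ?_⟩
      · rw [c_rec_zero]
        exact dvd_add (key 0 _ (ih 0).1) (key 0 _ (ih 0).2)
      · rw [d_rec_zero]
        exact dvd_add (key 0 _ (ih 0).1) (key 0 _ (ih 0).2)
    | j+1 =>
      have e1 : n + 1 - (j+1) = n - j := by omega
      have hcj : (2:ℤ)^(n+1-(j+1)) ∣ c n j := by rw [e1]; exact (ih j).1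
      have hdj : (2:ℤ)^(n+1-(j+1)) ∣ d n j := by rw [e1]; exact (ih j).2
      have hc2 : (2:ℤ)^(n+1-(j+1)) ∣ 2 * c n (j+1) := key (j+1) _ (ih (j+1)).1
      have hd2 : (2:ℤ)^(n+1-(j+1)) ∣ 2 * d n (j+1) := key (j+1) _ (ih (j+1)).2
      refine ⟨?_, ?_⟩
      · rw [c_rec]
        exact dvd_add (dvd_add (dvd_add hcj hc2) (hdj.mul_left 2)) hd2
      · rw [d_rec]
        exact dvd_add (dvd_add hdj hd2) hc2

lemma c_self (n : ℕ) : c n n = 1 := by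
  rw [c, Finset.sum_range_succ]
  have hz : ∑ i ∈ Finset.range n, ((2*n).choose (2*i) : ℤ) * (i.choose n : ℤ) = 0 := by
    apply Finset.sum_eq_zero
    intro i hi
    simp only [Finset.mem_range] at hi
    have : i.choose n = 0 := Nat.choose_eq_zero_of_lt (by omega)
    simp [this]
  simp [hz, Nat.choose_self]

lemma A_rec (n : ℕ) : ∑ j ∈ Finset.range (n+2), c (n+1) j * A j = 0 := by
  have h0 : ∑ r ∈ Finset.range (n+2), ((2*(n+1)).choose (2*r) : ℤ) * e r = 0 := by
    have h := e_rec n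
    rw [Finset.sum_range_succ]
    have h1 : (2*(n+1)).choose (2*(n+1)) = 1 := Nat.choose_self _
    have h2 : ∀ r, ((2*(n+1)).choose (2*r) : ℤ) = ((2*n+2).choose (2*r) : ℤ) := by
      intro r; norm_num [Nat.mul_add]
    rw [Finset.sum_congr rfl (fun r _ => by rw [h2 r])]
    rw [h1, h]
    push_cast
    ring
  have hrw : ∀ r ∈ Finset.range (n+2), ((2*(n+1)).choose (2*r) : ℤ) * e r
      = ∑ j ∈ Finset.range (n+2), ((2*(n+1)).choose (2*r) : ℤ) * ((r.choose j : ℤ) * A j) := by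
    intro r hr
    simp only [Finset.mem_range] at hr
    rw [e_eq_sum_A r, Finset.mul_sum]
    apply Finset.sum_subset
    · intro x hx; simp only [Finset.mem_range] at *; omega
    · intro x _ hx
      simp only [Finset.mem_range, not_lt] at hx
      have : r.choose x = 0 := Nat.choose_eq_zero_of_lt (by omega)
      simp [this]
  rw [Finset.sum_congr rfl hrw, Finset.sum_comm] at h0
  rw [← h0]
  apply Finset.sum_congr rfl
  intro j _
  simp only [c]
  rw [Finset.sum_mul]
  apply Finset.sum_congr rfl
  intro i _
  ring

lemma A_dvd (n : ℕ) : (2:ℤ)^n ∣ A n := by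
  induction n using Nat.strong_induction_on with
  | _ n ih =>
    match n with
    | 0 => simp
    | m+1 =>
      have h := A_rec m
      rw [Finset.sum_range_succ, c_self, one_mul] at h
      have hA : A (m+1) = -∑ j ∈ Finset.range (m+1), c (m+1) j * A j := by linarith
      rw [hA]
      rw [dvd_neg]
      apply Finset.dvd_sum
      intro j hj
      simp only [Finset.mem_range] at hj
      have h1 : (2:ℤ)^(m+1-j) ∣ c (m+1) j := (cd_dvd (m+1) j).1
      have h2 : (2:ℤ)^j ∣ A j := ih j (by omega)
      have : (2:ℤ)^(m+1) = 2^(m+1-j) * 2^j := by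
        rw [← pow_add]; congr 1; omega
      rw [this]
      exact mul_dvd_mul h1 h2

end SternAux
namespace SternAux
open Finset

lemma e0 : e 0 = 1 := by show eulerE 0 = 1; simp [eulerE]
lemma e1 : e 1 = -1 := by
  rw [e_rec 0]; simp [Finset.sum_range_one, e0]
lemma e2 : e 2 = 5 := by
  rw [e_rec 1]
  rw [Finset.sum_range_succ, Finset.sum_range_one, e0, e1]
  norm_num [Nat.choose]
lemma e3 : e 3 = -61 := by
  rw [e_rec 2]
  rw [Finset.sum_range_succ, Finset.sum_range_succ, Finset.sum_range_one, e0, e1, e2]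
  norm_num [Nat.choose]
lemma e4 : e 4 = 1385 := by
  rw [e_rec 3]
  rw [Finset.sum_range_succ, Finset.sum_range_succ, Finset.sum_range_succ,
    Finset.sum_range_one, e0, e1, e2, e3]
  norm_num [Nat.choose]
lemma e5 : e 5 = -50521 := by
  rw [e_rec 4]
  rw [Finset.sum_range_succ, Finset.sum_range_succ, Finset.sum_range_succ,
    Finset.sum_range_succ, Finset.sum_range_one, e0, e1, e2, e3, e4]
  norm_num [Nat.choose]

lemma A1 : A 1 = -2 := by
  rw [A, Finset.sum_range_succ, Finset.sum_range_one, e0, e1]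
  norm_num [Nat.choose]
lemma A2 : A 2 = 8 := by
  rw [A, Finset.sum_range_succ, Finset.sum_range_succ, Finset.sum_range_one, e0, e1, e2]
  norm_num [Nat.choose]
lemma A3 : A 3 = -80 := by
  rw [A, Finset.sum_range_succ, Finset.sum_range_succ, Finset.sum_range_succ,
    Finset.sum_range_one, e0, e1, e2, e3]
  norm_num [Nat.choose]
lemma A4 : A 4 = 1664 := by
  rw [A, Finset.sum_range_succ, Finset.sum_range_succ, Finset.sum_range_succ,
    Finset.sum_range_succ, Finset.sum_range_one, e0, e1, e2, e3, e4]
  norm_num [Nat.choose]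
lemma A5 : A 5 = -58112 := by
  rw [A, Finset.sum_range_succ, Finset.sum_range_succ, Finset.sum_range_succ,
    Finset.sum_range_succ, Finset.sum_range_succ, Finset.sum_range_one, e0, e1, e2, e3, e4, e5]
  norm_num [Nat.choose]

/-- If `i = 2^v * m` with `m` odd then `2^(t-v) ∣ C(2^t, i)`. -/
lemma dvd_choose_two_pow (t v m : ℕ) (hm : ¬ 2 ∣ m) (hm0 : 0 < m) :
    (2:ℕ)^(t-v) ∣ (2^t).choose (2^v * m) := by
  rcases le_or_gt t v with h | h
  · simp [Nat.sub_eq_zero_of_le h]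
  · set i := 2^v * m with hi
    have hi0 : 0 < i := Nat.mul_pos (Nat.two_pow_pos v) hm0
    have hkey : 2^t * ((2^t - 1).choose (i-1)) = (2^t).choose i * i := by
      have h1 := Nat.add_one_mul_choose_eq (2^t - 1) (i-1)
      have h2 : (2^t - 1) + 1 = 2^t := by
        have : 0 < 2^t := Nat.two_pow_pos t
        omega
      have h3 : (i-1) + 1 = i := by omega
      rw [h2, h3] at h1
      exact h1
    have hsplit : (2:ℕ)^t = 2^v * 2^(t-v) := by
      rw [← pow_add]; congr 1; omega
    have hkey2 : 2^v * (2^(t-v) * ((2^t - 1).choose (i-1)))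
        = 2^v * ((2^t).choose i * m) := by
      calc 2^v * (2^(t-v) * ((2^t - 1).choose (i-1)))
          = 2^t * ((2^t - 1).choose (i-1)) := by rw [hsplit]; ring
        _ = (2^t).choose i * i := hkey
        _ = 2^v * ((2^t).choose i * m) := by rw [hi]; ring
    have hkey3 : 2^(t-v) * ((2^t - 1).choose (i-1)) = (2^t).choose i * m :=
      Nat.eq_of_mul_eq_mul_left (Nat.two_pow_pos v) hkey2
    have hdvd : 2^(t-v) ∣ (2^t).choose i * m := ⟨_, hkey3.symm⟩
    have hcop : Nat.Coprime (2^(t-v)) m := by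
      apply Nat.Coprime.pow_left
      exact Nat.coprime_two_left.2 (Nat.odd_iff.2 (by omega))
    exact hcop.dvd_of_dvd_mul_right hdvd

end SternAux
namespace SternAux
open Finset

lemma pow_ge (v : ℕ) (hv : 3 ≤ v) : v + 4 ≤ 2^v := by
  induction v with
  | zero => omega
  | succ v ih =>
    rcases Nat.lt_or_ge v 3 with h | h
    · interval_cases v <;> omega
    · have := ih h
      rw [pow_succ]
      omega

lemma e_step (t : ℕ) (ht : 2 ≤ t) (N : ℕ) :
    e (N + 2^t) ≡ e N + 10 * 2^t [ZMOD 2^(t+4)] := by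
  set s : ℕ := 2^t with hs
  set M : ℕ := N + s with hMdef
  set K : ℕ := M + 6 with hKdef
  set δ : ℕ → ℤ := fun j => ((M.choose j : ℤ) - (N.choose j : ℤ)) with hδdef
  have hext : ∀ (L n : ℕ), n < L → e n = ∑ j ∈ Finset.range L, (n.choose j : ℤ) * A j := by
    intro L n hn
    rw [e_eq_sum_A n]
    apply Finset.sum_subset
    · intro x hx; simp only [Finset.mem_range] at *; omega
    · intro x _ hx
      simp only [Finset.mem_range, not_lt] at hx
      have : n.choose x = 0 := Nat.choose_eq_zero_of_lt (by omega)
      simp [this]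
  have hMK : M < K := Nat.lt_add_of_pos_right (by norm_num)
  have hNK : N < K := lt_of_le_of_lt (Nat.le_add_right N s) hMK
  have hdiff : e M - e N = ∑ j ∈ Finset.range K, δ j * A j := by
    rw [hext K M hMK, hext K N hNK, ← Finset.sum_sub_distrib]
    apply Finset.sum_congr rfl
    intro j _
    simp only [hδdef]
    ring
  have hδ : ∀ j, δ j = ∑ i ∈ Finset.range j, (N.choose i : ℤ) * ((s.choose (j-i) : ℕ) : ℤ) := by
    intro j
    have hv := Nat.add_choose_eq N s j
    rw [Finset.Nat.sum_antidiagonal_eq_sum_range_succ_mk, Finset.sum_range_succ] at hv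
    rw [Nat.sub_self, Nat.choose_zero_right, mul_one] at hv
    simp only [hδdef]
    rw [show (M.choose j : ℤ) = (((N+s).choose j : ℕ) : ℤ) by rw [hMdef], hv]
    push_cast
    ring
  -- small-index divisibility for C(s, i')
  have hsmall : ∀ i', 0 < i' → i' ≤ 5 → (2:ℤ)^(t-2) ∣ ((s.choose i' : ℕ) : ℤ) := by
    intro i' h0 h5
    obtain ⟨v, m, hm, hvm⟩ := Nat.exists_eq_pow_mul_and_not_dvd (show i' ≠ 0 by omega) 2 (by norm_num)
    have hm0 : 0 < m := by
      rcases Nat.eq_zero_or_pos m with h | h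
      · subst h; simp at hvm; omega
      · exact h
    have hv2 : v ≤ 2 := by
      by_contra hcon
      have h8 : (8:ℕ) ≤ 2^v := by
        calc (8:ℕ) = 2^3 := by norm_num
        _ ≤ 2^v := Nat.pow_le_pow_right (by norm_num) (by omega)
      have : 2^v ≤ 2^v * m := Nat.le_mul_of_pos_right _ hm0
      omega
    have hd := dvd_choose_two_pow t v m hm hm0
    rw [← hvm] at hd
    have h1 : (2:ℕ)^(t-2) ∣ 2^(t-v) := pow_dvd_pow 2 (by omega)
    exact_mod_cast Int.natCast_dvd_natCast.mpr (h1.trans hd)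
  have htail : ∀ j, 6 ≤ j → (2:ℤ)^(t+4) ∣ δ j * A j := by
    intro j hj
    rw [hδ j, Finset.sum_mul]
    apply Finset.dvd_sum
    intro i hi
    simp only [Finset.mem_range] at hi
    have h0 : 0 < j - i := by omega
    obtain ⟨v, m, hm, hvm⟩ := Nat.exists_eq_pow_mul_and_not_dvd (show j - i ≠ 0 by omega) 2 (by norm_num)
    have hm0 : 0 < m := by
      rcases Nat.eq_zero_or_pos m with h | h
      · subst h; simp at hvm; omega
      · exact h
    have h2v : 2^v ≤ j - i := by rw [hvm]; exact Nat.le_mul_of_pos_right _ hm0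
    have hij : j - i ≤ j := by omega
    have hAj : (2:ℤ)^j ∣ A j := A_dvd j
    rcases le_or_gt t v with hcase | hcase
    · have h2t : 2^t ≤ j :=
        le_trans (le_trans (Nat.pow_le_pow_right (by norm_num) hcase) h2v) hij
      have hj4 : t + 4 ≤ j := by
        rcases le_or_gt 3 t with h3 | h3
        · have := pow_ge t h3; omega
        · omega
      calc (2:ℤ)^(t+4) ∣ 2^j := pow_dvd_pow 2 hj4
        _ ∣ A j := hAj
        _ ∣ _ := dvd_mul_left _ _
    · have hCs : (2:ℤ)^(t-v) ∣ ((s.choose (j-i) : ℕ) : ℤ) := by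
        rw [hvm]
        exact_mod_cast Int.natCast_dvd_natCast.mpr (dvd_choose_two_pow t v m hm hm0)
      have hj4 : v + 4 ≤ j := by
        rcases le_or_gt 3 v with h3 | h3
        · have := pow_ge v h3; omega
        · omega
      have hmain : (2:ℤ)^(t+4) ∣ ((s.choose (j-i) : ℕ) : ℤ) * A j := by
        have hexp : t + 4 ≤ (t-v) + j := by omega
        calc (2:ℤ)^(t+4) ∣ 2^((t-v)+j) := pow_dvd_pow 2 hexp
          _ = 2^(t-v) * 2^j := pow_add 2 _ _
          _ ∣ _ := mul_dvd_mul hCs hAj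
      calc (2:ℤ)^(t+4) ∣ ((s.choose (j-i) : ℕ) : ℤ) * A j := hmain
        _ ∣ (N.choose i : ℤ) * ((s.choose (j-i) : ℕ) : ℤ) * A j := by
            rw [mul_assoc]; exact dvd_mul_left _ _
  -- split sum
  have hsplit : ∑ j ∈ Finset.range K, δ j * A j
      = (∑ j ∈ Finset.range 6, δ j * A j) + ∑ j ∈ Finset.Ico 6 K, δ j * A j := by
    rw [Finset.range_eq_Ico]
    exact (Finset.sum_Ico_consecutive _ (Nat.zero_le 6) (Nat.le_add_left 6 M)).symm
  -- explicit δ values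
  have hδ0 : δ 0 = 0 := by rw [hδ 0]; simp
  have hδ1 : δ 1 = (s : ℤ) := by
    rw [hδ 1, Finset.sum_range_one]
    simp [Nat.choose_one_right]
  have hδ2 : δ 2 = ((s.choose 2 : ℕ) : ℤ) + N * s := by
    rw [hδ 2, Finset.sum_range_succ, Finset.sum_range_one]
    simp [Nat.choose_one_right]
  have hδ3 : δ 3 = ((s.choose 3 : ℕ) : ℤ) + N * ((s.choose 2 : ℕ) : ℤ)
      + ((N.choose 2 : ℕ) : ℤ) * s := by
    rw [hδ 3, Finset.sum_range_succ, Finset.sum_range_succ, Finset.sum_range_one]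
    simp [Nat.choose_one_right]
  have hδ4dvd : (2:ℤ)^(t-2) ∣ δ 4 := by
    rw [hδ 4]
    apply Finset.dvd_sum
    intro i hi
    simp only [Finset.mem_range] at hi
    exact ((hsmall (4-i) (by omega) (by omega))).mul_left _
  have hδ5dvd : (2:ℤ)^(t-2) ∣ δ 5 := by
    rw [hδ 5]
    apply Finset.dvd_sum
    intro i hi
    simp only [Finset.mem_range] at hi
    exact ((hsmall (5-i) (by omega) (by omega))).mul_left _
  obtain ⟨w4, hw4⟩ := hδ4dvd
  obtain ⟨w5, hw5⟩ := hδ5dvd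
  -- p := 2^(t-2)
  set p : ℤ := (2:ℤ)^(t-2) with hpdef
  have hp : (2:ℤ)^t = 4 * p := by
    rw [hpdef, show (4:ℤ) = 2^2 by norm_num, ← pow_add, show 2+(t-2) = t by omega]
  have hscast : ((s:ℕ) : ℤ) = 4 * p := by
    rw [hs]; push_cast; rw [hp]
  have hmodval : (2:ℤ)^(t+4) = 64 * p := by
    rw [hpdef, show (64:ℤ) = 2^6 by norm_num, ← pow_add, show 6+(t-2) = t+4 by omega]
  -- C(s,2) = 2p(4p-1)
  have hCs2nat : s.choose 2 = 2^(t-1) * (2^t - 1) := by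
    rw [hs, Nat.choose_two_right]
    have h2 : (2:ℕ)^t = 2 * 2^(t-1) := by
      rw [← pow_succ']
      congr 1
      omega
    rw [h2, Nat.mul_assoc, Nat.mul_div_cancel_left _ (by norm_num : 0 < 2)]
  have hCs2 : ((s.choose 2 : ℕ) : ℤ) = 2 * p * (4 * p - 1) := by
    rw [hCs2nat]
    have h1 : (1:ℕ) ≤ 2^t := Nat.one_le_two_pow
    push_cast [Nat.cast_sub h1]
    rw [hp, hpdef, show t - 1 = (t-2)+1 by omega]
    ring
  -- C(s,3) = 4p * y
  have hCs3 : ∃ y : ℤ, ((s.choose 3 : ℕ) : ℤ) = 4 * p * y := by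
    have hd := dvd_choose_two_pow t 0 3 (by norm_num) (by norm_num)
    rw [show (2:ℕ)^0 * 3 = 3 by norm_num, Nat.sub_zero] at hd
    have : (2:ℤ)^t ∣ ((s.choose 3 : ℕ) : ℤ) := by
      rw [hs]; exact_mod_cast Int.natCast_dvd_natCast.mpr hd
    obtain ⟨y, hy⟩ := this
    exact ⟨y, by rw [hy, hp]⟩
  obtain ⟨y, hy⟩ := hCs3
  -- head computation
  have hhead : (2:ℤ)^(t+4) ∣ (∑ j ∈ Finset.range 6, δ j * A j) - 10 * 2^t := by
    rw [Finset.sum_range_succ, Finset.sum_range_succ, Finset.sum_range_succ,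
      Finset.sum_range_succ, Finset.sum_range_succ, Finset.sum_range_one]
    rw [hδ0, hδ1, hδ2, hδ3, hw4, hw5, A1, A2, A3, A4, A5, hCs2, hy, hscast, hp, hmodval]
    refine ⟨p + 3*N - 10*N*p - 1 - 5*y - 5*((N.choose 2 : ℕ) : ℤ) + 26*w4 - 908*w5, ?_⟩

    ring
  -- tail sum
  have htailsum : (2:ℤ)^(t+4) ∣ ∑ j ∈ Finset.Ico 6 K, δ j * A j := by
    apply Finset.dvd_sum
    intro j hj
    exact htail j (Finset.mem_Ico.mp hj).1
  -- conclude
  have hfin : (2:ℤ)^(t+4) ∣ (e N + 10 * 2^t) - e M := by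
    have h1 : (e N + 10 * 2^t) - e M
        = -(((∑ j ∈ Finset.range 6, δ j * A j) - 10 * 2^t) + ∑ j ∈ Finset.Ico 6 K, δ j * A j) := by
      have := hdiff
      rw [hsplit] at this
      linarith
    rw [h1]
    exact (dvd_add hhead htailsum).neg_right
  show e M ≡ e N + 10 * 2^t [ZMOD 2^(t+4)]
  exact (Int.modEq_iff_dvd).mpr hfin

end SternAux
namespace SternAux

lemma e_steps (t : ℕ) (ht : 2 ≤ t) (N k : ℕ) :
    e (N + 2^t * k) ≡ e N + 10 * 2^t * k [ZMOD 2^(t+4)] := by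
  induction k with
  | zero => simp
  | succ k ih =>
    have h1 : e ((N + 2^t * k) + 2^t) ≡ e (N + 2^t * k) + 10 * 2^t [ZMOD 2^(t+4)] :=
      e_step t ht (N + 2^t * k)
    have h2 := h1.trans (ih.add_right (10 * 2^t))
    have hidx : N + 2^t * (k+1) = (N + 2^t * k) + 2^t := by ring
    rw [hidx]
    calc e ((N + 2^t * k) + 2^t) ≡ e N + 10*2^t*k + 10*2^t [ZMOD 2^(t+4)] := h2
    _ = e N + 10 * 2^t * (k+1) := by ring

end SternAux

theorem stern_congruence_m_ge_three (b k m : ℕ) (hb : Even b) (hk : 0 < k) (hm : 3 ≤ m) :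
    eulerE (2 ^ m * k + b) ≡ eulerE b + 5 * 2 ^ m * k [ZMOD 2 ^ (m + 3)] := by
  obtain ⟨N, hN⟩ := hb
  have hN' : b = 2 * N := by omega
  obtain ⟨t, ht⟩ : ∃ t, m = t + 1 := ⟨m - 1, by omega⟩
  have ht2 : 2 ≤ t := by omega
  have hidx : 2 ^ m * k + b = 2 * (N + 2^t * k) := by
    subst ht hN'; ring
  have key := SternAux.e_steps t ht2 N k
  have h1 : eulerE (2^m * k + b) = SternAux.e (N + 2^t * k) := by rw [hidx]; rfl
  have h2 : eulerE b = SternAux.e N := by rw [hN']; rfl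
  have hmod : (2:ℤ)^(m+3) = 2^(t+4) := by rw [ht]
  have hrhs : (SternAux.e N + 10 * 2^t * k : ℤ) = eulerE b + 5 * 2^m * k := by
    rw [h2, ht]; ring
  rw [h1]
  unfold Int.ModEq at key ⊢
  rw [hmod, ← hrhs]
  exact key
end

section
/- Let b be a nonnegative even integer and let k and m be positive integers with m ≥ 4. Then E_{2^m k + b} ≡ E_b + 5·2^m k (mod 2^{m+4}) if b ≡ 0 or 6 (mod 8), and E_{2^m k + b} ≡ E_b - 3·2^m k (mod 2^{m+4}) if b ≡ 2 or 4 (mod 8). -/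
namespace Stern
open Finset


/-- `E n = eulerE (2n)`. -/
def E (n : ℕ) : ℤ := eulerE (2 * n)

lemma E_zero : E 0 = 1 := by
  simp [E, eulerE]

lemma E_rec (n : ℕ) (hn : 1 ≤ n) :
    ∑ r ∈ range (n + 1), ((2 * n).choose (2 * r) : ℤ) * E r = 0 := by
  obtain ⟨m, rfl⟩ : ∃ m, n = m + 1 := ⟨n - 1, by omega⟩
  have h2 : 2 * (m + 1) = 2 * m + 2 := by ring
  have he : Even (2 * m) := ⟨m, by ring⟩
  have hunfold : eulerE (2 * m + 2) =
      -∑ r ∈ (Finset.range (2 * m / 2 + 1)).attach,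
        ((2 * m + 2).choose (2 * r.1) : ℤ) * eulerE (2 * r.1) := by
    rw [eulerE]
    simp [he]
  have hdiv : 2 * m / 2 + 1 = m + 1 := by omega
  rw [hdiv] at hunfold
  have hattach : ∑ r ∈ (Finset.range (m + 1)).attach,
      ((2 * m + 2).choose (2 * r.1) : ℤ) * eulerE (2 * r.1)
      = ∑ r ∈ Finset.range (m + 1), ((2 * m + 2).choose (2 * r) : ℤ) * eulerE (2 * r) :=
    Finset.sum_attach (Finset.range (m+1)) (fun r => ((2 * m + 2).choose (2 * r) : ℤ) * eulerE (2 * r))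
  rw [Finset.sum_range_succ]
  have : E (m + 1) = eulerE (2 * m + 2) := by rw [E, h2]
  rw [this, hunfold, hattach]
  have : ((2 * (m + 1)).choose (2 * (m + 1)) : ℤ) = 1 := by
    rw [Nat.choose_self]; norm_num
  rw [this]
  have hsum : ∑ r ∈ Finset.range (m + 1), ((2 * (m + 1)).choose (2 * r) : ℤ) * E r
      = ∑ r ∈ Finset.range (m + 1), ((2 * m + 2).choose (2 * r) : ℤ) * eulerE (2 * r) := by
    apply Finset.sum_congr rfl
    intro r _
    rw [E, h2]
  rw [hsum]
  ring

lemma E_one : E 1 = -1 := by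
  have h := E_rec 1 (by norm_num)
  simp [Finset.sum_range_succ, E_zero] at h
  linarith

lemma E_two : E 2 = 5 := by
  have h := E_rec 2 (by norm_num)
  simp [Finset.sum_range_succ, E_zero, E_one] at h
  norm_num [Nat.choose] at h
  linarith

lemma E_three : E 3 = -61 := by
  have h := E_rec 3 (by norm_num)
  simp [Finset.sum_range_succ, E_zero, E_one, E_two] at h
  norm_num [Nat.choose] at h
  linarith

lemma E_four : E 4 = 1385 := by
  have h := E_rec 4 (by norm_num)
  simp [Finset.sum_range_succ, E_zero, E_one, E_two, E_three] at h
  norm_num [Nat.choose] at h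
  linarith

def a : ℕ → ℤ
  | j => E j - ∑ i ∈ (Finset.range j).attach, (j.choose i.1 : ℤ) * a i.1
  decreasing_by
    have := i.2
    simp only [Finset.mem_range] at this
    omega

lemma a_spec (j : ℕ) : a j = E j - ∑ i ∈ range j, (j.choose i : ℤ) * a i := by
  conv_lhs => rw [a]
  congr 1
  exact Finset.sum_attach (range j) (fun i => (j.choose i : ℤ) * a i)

lemma E_eq_sum_a (j : ℕ) : E j = ∑ i ∈ range (j + 1), (j.choose i : ℤ) * a i := by
  rw [Finset.sum_range_succ, Nat.choose_self]
  have := a_spec j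
  push_cast
  linarith

lemma a_zero : a 0 = 1 := by rw [a_spec]; simp [E_zero]
lemma a_one : a 1 = -2 := by
  rw [a_spec]; simp [Finset.sum_range_succ, a_zero, E_one]
lemma a_two : a 2 = 8 := by
  rw [a_spec]; simp [Finset.sum_range_succ, a_zero, a_one, E_two]
lemma a_three : a 3 = -80 := by
  rw [a_spec]; simp [Finset.sum_range_succ, a_zero, a_one, a_two, E_three]
lemma a_four : a 4 = 1664 := by
  rw [a_spec]; simp [Finset.sum_range_succ, a_zero, a_one, a_two, a_three, E_four]
  norm_num [Nat.choose]

def G (j i : ℕ) : ℤ := ∑ r ∈ range (j + 1), ((2 * j).choose (2 * r) : ℤ) * (r.choose i : ℤ)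
def q (j i : ℕ) : ℤ := ∑ r ∈ range (j + 1), ((2 * j).choose (2 * r + 1) : ℤ) * ((r + 1).choose i : ℤ)

lemma G_def (j i : ℕ) :
    G j i = ∑ r ∈ range (j + 1), ((2 * j).choose (2 * r) : ℤ) * (r.choose i : ℤ) := rfl

lemma pascal2 (n k : ℕ) :
    ((n + 2).choose (k + 2) : ℤ) = n.choose k + 2 * n.choose (k + 1) + n.choose (k + 2) := by
  have h1 : (n + 2).choose (k + 2) = (n + 1).choose (k + 1) + (n + 1).choose (k + 2) :=
    Nat.choose_succ_succ _ _
  have h2 : (n + 1).choose (k + 1) = n.choose k + n.choose (k + 1) := Nat.choose_succ_succ _ _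
  have h3 : (n + 1).choose (k + 2) = n.choose (k + 1) + n.choose (k + 2) := Nat.choose_succ_succ _ _
  rw [h1, h2, h3]; push_cast; ring

/-- helper sum -/
def S1 (j i : ℕ) : ℤ := ∑ r ∈ range (j + 1), ((2 * j).choose (2 * r) : ℤ) * ((r + 1).choose i : ℤ)
def T1 (j i : ℕ) : ℤ := ∑ r ∈ range (j + 1), ((2 * j).choose (2 * r + 1) : ℤ) * ((r + 2).choose i : ℤ)

lemma S1_zero (j : ℕ) : S1 j 0 = G j 0 := by
  unfold S1 G; simp

lemma S1_succ (j i : ℕ) : S1 j (i + 1) = G j i + G j (i + 1) := by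
  unfold S1 G
  rw [← Finset.sum_add_distrib]
  apply Finset.sum_congr rfl
  intro r _
  rw [Nat.choose_succ_succ r i]
  push_cast; ring

lemma T1_zero (j : ℕ) : T1 j 0 = q j 0 := by
  unfold T1 q; simp

lemma T1_succ (j i : ℕ) : T1 j (i + 1) = q j i + q j (i + 1) := by
  unfold T1 q
  rw [← Finset.sum_add_distrib]
  apply Finset.sum_congr rfl
  intro r _
  rw [Nat.choose_succ_succ (r + 1) i]
  push_cast; ring

-- S3 = G j i - C(0,i)
lemma S3_eq (j i : ℕ) :
    ∑ r ∈ range (j + 1), ((2 * j).choose (2 * r + 2) : ℤ) * ((r + 1).choose i : ℤ)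
    = G j i - ((0 : ℕ).choose i : ℤ) := by
  have hA : ∑ r ∈ range (j + 2), ((2 * j).choose (2 * r) : ℤ) * (r.choose i : ℤ) = G j i := by
    rw [Finset.sum_range_succ]
    have : (2 * j).choose (2 * (j + 1)) = 0 := Nat.choose_eq_zero_of_lt (by omega)
    rw [this]; unfold G; push_cast; ring
  have hA' : ∑ r ∈ range (j + 2), ((2 * j).choose (2 * r) : ℤ) * (r.choose i : ℤ)
      = (∑ r ∈ range (j + 1), ((2 * j).choose (2 * (r + 1)) : ℤ) * ((r + 1).choose i : ℤ))
        + ((2 * j).choose 0 : ℤ) * ((0 : ℕ).choose i : ℤ) :=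
    Finset.sum_range_succ' _ _
  rw [hA] at hA'
  simp only [show ∀ r:ℕ, 2*(r+1)=2*r+2 from fun r => by ring, show ∀ r:ℕ, r+1+1=r+2 from fun r => by ring, show ∀ r:ℕ, 2*(r+1)+1=2*r+3 from fun r => by ring] at hA'
  simp at hA'
  linarith

-- T2' = S1 j i - C(1,i)
lemma T2_eq (j i : ℕ) :
    ∑ r ∈ range (j + 1), ((2 * j).choose (2 * r + 2) : ℤ) * ((r + 2).choose i : ℤ)
    = S1 j i - ((1 : ℕ).choose i : ℤ) := by
  have hA : ∑ r ∈ range (j + 2), ((2 * j).choose (2 * r) : ℤ) * ((r + 1).choose i : ℤ) = S1 j i := by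
    rw [Finset.sum_range_succ]
    have : (2 * j).choose (2 * (j + 1)) = 0 := Nat.choose_eq_zero_of_lt (by omega)
    rw [this]; unfold S1; push_cast; ring
  have hA' : ∑ r ∈ range (j + 2), ((2 * j).choose (2 * r) : ℤ) * ((r + 1).choose i : ℤ)
      = (∑ r ∈ range (j + 1), ((2 * j).choose (2 * (r + 1)) : ℤ) * ((r + 1 + 1).choose i : ℤ))
        + ((2 * j).choose 0 : ℤ) * ((1 : ℕ).choose i : ℤ) :=
    Finset.sum_range_succ' _ _
  rw [hA] at hA'
  simp only [show ∀ r:ℕ, 2*(r+1)=2*r+2 from fun r => by ring, show ∀ r:ℕ, r+1+1=r+2 from fun r => by ring, show ∀ r:ℕ, 2*(r+1)+1=2*r+3 from fun r => by ring] at hA'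
  simp at hA'
  linarith

-- T3 = q j i - 2j * C(1,i)
lemma T3_eq (j i : ℕ) :
    ∑ r ∈ range (j + 1), ((2 * j).choose (2 * r + 3) : ℤ) * ((r + 2).choose i : ℤ)
    = q j i - (2 * j : ℤ) * ((1 : ℕ).choose i : ℤ) := by
  have hA : ∑ r ∈ range (j + 2), ((2 * j).choose (2 * r + 1) : ℤ) * ((r + 1).choose i : ℤ) = q j i := by
    rw [Finset.sum_range_succ]
    have : (2 * j).choose (2 * (j + 1) + 1) = 0 := Nat.choose_eq_zero_of_lt (by omega)
    rw [this]; unfold q; push_cast; ring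
  have hA' : ∑ r ∈ range (j + 2), ((2 * j).choose (2 * r + 1) : ℤ) * ((r + 1).choose i : ℤ)
      = (∑ r ∈ range (j + 1), ((2 * j).choose (2 * (r + 1) + 1) : ℤ) * ((r + 1 + 1).choose i : ℤ))
        + ((2 * j).choose 1 : ℤ) * ((1 : ℕ).choose i : ℤ) :=
    Finset.sum_range_succ' _ _
  rw [hA] at hA'
  simp only [show ∀ r:ℕ, 2*(r+1)=2*r+2 from fun r => by ring, show ∀ r:ℕ, r+1+1=r+2 from fun r => by ring, show ∀ r:ℕ, 2*(r+1)+1=2*r+3 from fun r => by ring] at hA'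
  rw [Nat.choose_one_right] at hA'
  push_cast at hA'
  linarith

lemma G_rec (j i : ℕ) : G (j + 1) i = S1 j i + 2 * q j i + G j i := by
  have expand : G (j + 1) i
      = (∑ r ∈ range (j + 1), ((2 * (j + 1)).choose (2 * (r + 1)) : ℤ) * ((r + 1).choose i : ℤ))
        + ((2 * (j + 1)).choose 0 : ℤ) * ((0 : ℕ).choose i : ℤ) := by
    unfold G
    exact Finset.sum_range_succ' _ _
  have step : ∑ r ∈ range (j + 1), ((2 * (j + 1)).choose (2 * (r + 1)) : ℤ) * ((r + 1).choose i : ℤ)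
      = ∑ r ∈ range (j + 1),
          (((2 * j).choose (2 * r) : ℤ) + 2 * ((2 * j).choose (2 * r + 1) : ℤ)
            + ((2 * j).choose (2 * r + 2) : ℤ)) * ((r + 1).choose i : ℤ) := by
    apply Finset.sum_congr rfl
    intro r _
    congr 1
    have h1 : 2 * (j + 1) = 2 * j + 2 := by ring
    have h2 : 2 * (r + 1) = 2 * r + 2 := by ring
    rw [h1, h2, pascal2]
  rw [expand, step]
  simp only [mul_add, add_mul]
  rw [Finset.sum_add_distrib, Finset.sum_add_distrib, S3_eq]
  have : (∑ r ∈ range (j + 1), ((2 * j).choose (2 * r) : ℤ) * ((r + 1).choose i : ℤ)) = S1 j i := rfl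
  rw [this]
  have : (∑ r ∈ range (j + 1), 2 * ((2 * j).choose (2 * r + 1) : ℤ) * ((r + 1).choose i : ℤ))
      = 2 * q j i := by
    unfold q; rw [Finset.mul_sum]; apply Finset.sum_congr rfl; intro r _; ring
  rw [this]
  simp
  ring

lemma q_rec (j i : ℕ) : q (j + 1) i = T1 j i + 2 * S1 j i + q j i := by
  have expand : q (j + 1) i
      = (∑ r ∈ range (j + 1), ((2 * (j + 1)).choose (2 * (r + 1) + 1) : ℤ) * ((r + 1 + 1).choose i : ℤ))
        + ((2 * (j + 1)).choose 1 : ℤ) * ((1 : ℕ).choose i : ℤ) := by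
    unfold q
    exact Finset.sum_range_succ' _ _
  have step : ∑ r ∈ range (j + 1), ((2 * (j + 1)).choose (2 * (r + 1) + 1) : ℤ) * ((r + 1 + 1).choose i : ℤ)
      = ∑ r ∈ range (j + 1),
          (((2 * j).choose (2 * r + 1) : ℤ) + 2 * ((2 * j).choose (2 * r + 2) : ℤ)
            + ((2 * j).choose (2 * r + 3) : ℤ)) * ((r + 2).choose i : ℤ) := by
    apply Finset.sum_congr rfl
    intro r _
    have h1 : 2 * (j + 1) = 2 * j + 2 := by ring
    have h2 : 2 * (r + 1) + 1 = (2 * r + 1) + 2 := by ring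
    have h3 : r + 1 + 1 = r + 2 := by ring
    rw [h1, h2, h3, pascal2]
  rw [expand, step]
  simp only [mul_add, add_mul]
  rw [Finset.sum_add_distrib, Finset.sum_add_distrib, T3_eq]
  have hT1 : (∑ r ∈ range (j + 1), ((2 * j).choose (2 * r + 1) : ℤ) * ((r + 2).choose i : ℤ)) = T1 j i := rfl
  rw [hT1]
  have : (∑ r ∈ range (j + 1), 2 * ((2 * j).choose (2 * r + 2) : ℤ) * ((r + 2).choose i : ℤ))
      = 2 * (S1 j i - ((1 : ℕ).choose i : ℤ)) := by
    rw [← T2_eq j i, Finset.mul_sum]; apply Finset.sum_congr rfl; intro r _; ring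
  rw [this]
  simp [Nat.choose_one_right]
  push_cast
  ring

lemma Gq_dvd : ∀ j i : ℕ,
    ((2:ℤ) ^ (2 * (j - i) - 1) ∣ G j i) ∧ ((2:ℤ) ^ (2 * (j - i)) ∣ (G j i + q j i)) := by
  intro j
  induction j with
  | zero =>
    intro i
    simp only [Nat.zero_sub, Nat.mul_zero, Nat.zero_sub, pow_zero]
    exact ⟨one_dvd _, one_dvd _⟩
  | succ j IH =>
    intro i
    match i with
    | 0 =>
      have hG : G (j + 1) 0 = 2 * (G j 0 + q j 0) := by
        rw [G_rec, S1_zero]; ring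
      have hsum : G (j + 1) 0 + q (j + 1) 0 = 4 * (G j 0 + q j 0) := by
        rw [G_rec, q_rec, T1_zero, S1_zero]; ring
      obtain ⟨-, hB⟩ := IH 0
      constructor
      · rw [hG]
        have he : (2:ℤ) ^ (2 * (j + 1 - 0) - 1) = 2 * 2 ^ (2 * (j - 0)) := by
          rw [← pow_succ']; congr 1; all_goals omega
        rw [he]
        exact mul_dvd_mul_left 2 hB
      · rw [hsum]
        have he : (2:ℤ) ^ (2 * (j + 1 - 0)) = 4 * 2 ^ (2 * (j - 0)) := by
          have : (4:ℤ) = 2 ^ 2 := by norm_num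
          rw [this, ← pow_add]; congr 1; all_goals omega
        rw [he]
        exact mul_dvd_mul_left 4 hB
    | Nat.succ i =>
      by_cases hji : j ≤ i
      · have h0 : j + 1 - (i + 1) = 0 := by omega
        rw [h0]
        simp only [Nat.mul_zero, Nat.zero_sub, pow_zero]
        exact ⟨one_dvd _, one_dvd _⟩
      · push_neg at hji
        have hG1 : G (j + 1) (i + 1) = G j i + 2 * (G j (i + 1) + q j (i + 1)) := by
          rw [G_rec, S1_succ]; ring
        have hsum : G (j + 1) (i + 1) + q (j + 1) (i + 1)
            = (G j i + q j i) + 2 * G j i + 4 * (G j (i + 1) + q j (i + 1)) := by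
          rw [G_rec, q_rec, S1_succ, T1_succ]; ring
        obtain ⟨hAi, hBi⟩ := IH i
        obtain ⟨-, hBi1⟩ := IH (i + 1)
        have hexp : j + 1 - (i + 1) = j - i := by omega
        constructor
        · rw [hG1, hexp]
          apply dvd_add hAi
          have he : (2:ℤ) ^ (2 * (j - i) - 1) = 2 * 2 ^ (2 * (j - (i + 1))) := by
            rw [← pow_succ']; congr 1; all_goals omega
          rw [he]
          exact mul_dvd_mul_left 2 hBi1
        · rw [hsum, hexp]
          apply dvd_add
          apply dvd_add hBi
          · have he : (2:ℤ) ^ (2 * (j - i)) = 2 * 2 ^ (2 * (j - i) - 1) := by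
              rw [← pow_succ']; congr 1; all_goals omega
            rw [he]
            exact mul_dvd_mul_left 2 hAi
          · have he : (2:ℤ) ^ (2 * (j - i)) = 4 * 2 ^ (2 * (j - (i + 1))) := by
              have : (4:ℤ) = 2 ^ 2 := by norm_num
              rw [this, ← pow_add]; congr 1; all_goals omega
            rw [he]
            exact mul_dvd_mul_left 4 hBi1

lemma G_dvd (j i : ℕ) : (2:ℤ) ^ (2 * (j - i) - 1) ∣ G j i := (Gq_dvd j i).1

lemma G_diag (j : ℕ) : G j j = 1 := by
  rw [G_def, Finset.sum_range_succ]
  have h1 : ∑ r ∈ range j, ((2 * j).choose (2 * r) : ℤ) * (r.choose j : ℤ) = 0 := by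
    apply Finset.sum_eq_zero
    intro r hr
    rw [Finset.mem_range] at hr
    rw [Nat.choose_eq_zero_of_lt hr]
    simp
  rw [h1, Nat.choose_self, Nat.choose_self]
  simp

lemma a_sum_G (j : ℕ) (hj : 1 ≤ j) : ∑ i ∈ range (j + 1), G j i * a i = 0 := by
  have h0 := E_rec j hj
  have hswap : ∑ r ∈ range (j + 1), ((2 * j).choose (2 * r) : ℤ) * E r
      = ∑ i ∈ range (j + 1), G j i * a i := by
    have h1 : ∀ r ∈ range (j + 1), ((2 * j).choose (2 * r) : ℤ) * E r
        = ∑ i ∈ range (j + 1), ((2 * j).choose (2 * r) : ℤ) * ((r.choose i : ℤ) * a i) := by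
      intro r hr
      rw [Finset.mem_range] at hr
      have hEr : E r = ∑ i ∈ range (j + 1), (r.choose i : ℤ) * a i := by
        rw [E_eq_sum_a r]
        apply Finset.sum_subset
        · exact Finset.range_subset_range.mpr (by omega)
        · intro i _ hi
          rw [Finset.mem_range] at hi
          push_neg at hi
          rw [Nat.choose_eq_zero_of_lt (by omega)]
          simp
      rw [hEr, Finset.mul_sum]
    rw [Finset.sum_congr rfl h1, Finset.sum_comm]
    apply Finset.sum_congr rfl
    intro i _
    rw [G_def, Finset.sum_mul]
    apply Finset.sum_congr rfl
    intro r _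
    ring
  rw [hswap] at h0
  exact h0

lemma a_eq_neg_sum (j : ℕ) (hj : 1 ≤ j) : a j = -∑ i ∈ range j, G j i * a i := by
  have h := a_sum_G j hj
  rw [Finset.sum_range_succ, G_diag] at h
  linarith

lemma le_mul_two_pow (i d : ℕ) (hi : 1 ≤ i) : i + d ≤ i * 2 ^ d := by
  induction d with
  | zero => simp
  | succ d IH =>
    have : i * 2 ^ (d + 1) = 2 * (i * 2 ^ d) := by ring
    rw [this]
    omega

lemma log_mul_two_pow (i d : ℕ) (hi : 1 ≤ i) : Nat.log 2 (i * 2 ^ d) = Nat.log 2 i + d := by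
  induction d with
  | zero => simp
  | succ d IH =>
    have h1 : i * 2 ^ (d + 1) = (i * 2 ^ d) * 2 := by ring
    rw [h1, Nat.log_mul_base (by norm_num) (by positivity), IH]
    omega

lemma log_le_add (i j : ℕ) (hi : 1 ≤ i) (hij : i ≤ j) :
    Nat.log 2 j ≤ Nat.log 2 i + (j - i) := by
  have h1 : j ≤ i * 2 ^ (j - i) := by
    have := le_mul_two_pow i (j - i) hi
    omega
  calc Nat.log 2 j ≤ Nat.log 2 (i * 2 ^ (j - i)) := Nat.log_mono_right h1
    _ = Nat.log 2 i + (j - i) := log_mul_two_pow i (j - i) hi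

lemma lt_two_pow_sub2 : ∀ j : ℕ, 5 ≤ j → j < 2 ^ (j - 2) := by
  intro j hj
  induction j with
  | zero => omega
  | succ n IH =>
    rcases Nat.lt_or_ge n 5 with h | h
    · have : n = 4 := by omega
      subst this
      norm_num
    · have h1 := IH (by omega)
      have h2 : n + 1 - 2 = (n - 2) + 1 := by omega
      rw [h2, pow_succ]
      omega

lemma log_le_sub3 (j : ℕ) (hj : 5 ≤ j) : Nat.log 2 j ≤ j - 3 := by
  have h1 : Nat.log 2 j < j - 2 := Nat.log_lt_of_lt_pow (by omega) (lt_two_pow_sub2 j hj)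
  omega

lemma pow_mul_helper {x y : ℤ} {α β n : ℕ} (hx : (2:ℤ) ^ α ∣ x) (hy : (2:ℤ) ^ β ∣ y)
    (h : n ≤ α + β) : (2:ℤ) ^ n ∣ x * y := by
  refine dvd_trans (pow_dvd_pow 2 h) ?_
  rw [pow_add]
  exact mul_dvd_mul hx hy

lemma a_val : ∀ j : ℕ, 4 ≤ j → (2:ℤ) ^ (5 + Nat.log 2 j) ∣ a j := by
  intro j
  induction j using Nat.strong_induction_on with
  | _ j IH =>
    intro hj
    rcases Nat.lt_or_ge j 5 with h5 | h5
    · have h4 : j = 4 := by omega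
      subst h4
      have hlog : Nat.log 2 4 = 2 := by
        apply Nat.log_eq_of_pow_le_of_lt_pow <;> norm_num
      rw [hlog, a_four]
      norm_num
    · rw [a_eq_neg_sum j (by omega)]
      rw [dvd_neg]
      apply Finset.dvd_sum
      intro i hi
      rw [Finset.mem_range] at hi
      have hlogj : Nat.log 2 j ≤ j - 3 := log_le_sub3 j h5
      match i, hi with
      | 0, _ =>
        rw [a_zero, mul_one]
        refine dvd_trans (pow_dvd_pow 2 ?_) (G_dvd j 0)
        omega
      | 1, _ =>
        rw [a_one]
        refine pow_mul_helper (G_dvd j 1) (β := 1) ⟨-1, by norm_num⟩ (by omega)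
      | 2, _ =>
        rw [a_two]
        refine pow_mul_helper (G_dvd j 2) (β := 3) ⟨1, by norm_num⟩ (by omega)
      | 3, _ =>
        rw [a_three]
        refine pow_mul_helper (G_dvd j 3) (β := 4) ⟨-5, by norm_num⟩ (by omega)
      | (m + 4), hi =>
        have hIH := IH (m + 4) hi (by omega)
        refine pow_mul_helper (G_dvd j (m + 4)) hIH ?_
        have hlog := log_le_add (m + 4) j (by omega) (by omega)
        omega

lemma choose_a_dvd (T s j m : ℕ) (hm : 4 ≤ m) (hT : 2 ^ (m - 1) ∣ T) (hT0 : 0 < T)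
    (hs1 : 1 ≤ s) (hsj : s ≤ j) (hj : 4 ≤ j) :
    (2:ℤ) ^ (m + 4) ∣ (T.choose s : ℤ) * a j := by
  obtain ⟨v, u, hu, rfl⟩ := Nat.exists_eq_pow_mul_and_not_dvd (show s ≠ 0 by omega) 2 (by norm_num)
  have hu1 : 1 ≤ u := by
    rcases Nat.eq_zero_or_pos u with h | h
    · exfalso; exact hu (by simp [h])
    · exact h
  have hvlog : v ≤ Nat.log 2 j := by
    have h1 : 2 ^ v ≤ j := by
      calc 2 ^ v ≤ 2 ^ v * u := Nat.le_mul_of_pos_right _ hu1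
        _ ≤ j := hsj
    exact (Nat.le_log_iff_pow_le (by norm_num) (by omega)).mpr h1
  rcases Nat.lt_or_ge v (m - 1) with hv | hv
  · -- small v : extract powers of two from the binomial coefficient
    have hkey : T * (T - 1).choose (2 ^ v * u - 1) = T.choose (2 ^ v * u) * (2 ^ v * u) := by
      have : (T - 1).succ * (T - 1).choose (2 ^ v * u - 1) = (T - 1).succ.choose (2 ^ v * u - 1).succ * (2 ^ v * u - 1).succ := Nat.add_one_mul_choose_eq (T - 1) (2 ^ v * u - 1)
      have h1 : (T - 1).succ = T := by omega
      have h2 : (2 ^ v * u - 1).succ = 2 ^ v * u := by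
        have : 1 ≤ 2 ^ v * u := by omega
        omega
      rw [h1, h2] at this
      exact this
    have hdvd1 : 2 ^ (m - 1) ∣ T.choose (2 ^ v * u) * (2 ^ v * u) := by
      rw [← hkey]
      exact Dvd.dvd.mul_right hT _
    have hsplit : (2:ℕ) ^ (m - 1) = 2 ^ (m - 1 - v) * 2 ^ v := by
      rw [← pow_add]; congr 1; omega
    have hdvd2 : 2 ^ (m - 1 - v) ∣ T.choose (2 ^ v * u) * u := by
      have h1 : 2 ^ (m - 1 - v) * 2 ^ v ∣ (T.choose (2 ^ v * u) * u) * 2 ^ v := by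
        rw [← hsplit]
        calc (2:ℕ) ^ (m - 1) ∣ T.choose (2 ^ v * u) * (2 ^ v * u) := hdvd1
          _ = T.choose (2 ^ v * u) * u * 2 ^ v := by ring
      exact (Nat.mul_dvd_mul_iff_right (Nat.pow_pos (n := v) (by norm_num))).mp h1
    have hcop : Nat.Coprime (2 ^ (m - 1 - v)) u :=
      Nat.Coprime.pow_left _ ((Nat.prime_two.coprime_iff_not_dvd).mpr hu)
    have hdvd3 : 2 ^ (m - 1 - v) ∣ T.choose (2 ^ v * u) :=
      (Nat.Coprime.dvd_of_dvd_mul_right hcop) hdvd2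
    have hdvd4 : (2:ℤ) ^ (m - 1 - v) ∣ (T.choose (2 ^ v * u) : ℤ) := by
      have := Int.natCast_dvd_natCast.mpr hdvd3
      push_cast at this
      exact this
    exact pow_mul_helper hdvd4 (a_val j hj) (by omega)
  · -- big v : a j alone carries enough powers of two
    have h1 : m + 4 ≤ 5 + Nat.log 2 j := by omega
    have := a_val j hj
    exact Dvd.dvd.mul_left (dvd_trans (pow_dvd_pow 2 h1) this) _

lemma tail_dvd (n T j m : ℕ) (hm : 4 ≤ m) (hT : 2 ^ (m - 1) ∣ T) (hT0 : 0 < T) (hj : 4 ≤ j) :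
    (2:ℤ) ^ (m + 4) ∣ (((n + T).choose j : ℤ) - (n.choose j : ℤ)) * a j := by
  have hvdm := Nat.add_choose_eq n T j
  have hmem : ((j, 0) : ℕ × ℕ) ∈ Finset.HasAntidiagonal.antidiagonal j := by
    simp
  have hsum := (Finset.add_sum_erase _ (fun ij : ℕ × ℕ => n.choose ij.1 * T.choose ij.2) hmem).symm
  rw [hsum] at hvdm
  have hcast : ((n + T).choose j : ℤ) - (n.choose j : ℤ)
      = ∑ ij ∈ (Finset.HasAntidiagonal.antidiagonal j).erase (j, 0), (n.choose ij.1 : ℤ) * (T.choose ij.2 : ℤ) := by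
    have := congrArg (Nat.cast : ℕ → ℤ) hvdm
    push_cast at this
    simp only [Nat.choose_zero_right] at this
    push_cast at this
    linarith
  rw [hcast, Finset.sum_mul]
  apply Finset.dvd_sum
  intro ij hij
  have hij2 := Finset.mem_erase.mp hij
  have hanti := Finset.HasAntidiagonal.mem_antidiagonal.mp hij2.2
  have hs1 : 1 ≤ ij.2 := by
    rcases Nat.eq_zero_or_pos ij.2 with h | h
    · exfalso
      apply hij2.1
      have : ij.1 = j := by omega
      have h2 : ij = (ij.1, ij.2) := rfl
      rw [h2, this, h]
    · exact h
  have hcore := choose_a_dvd T ij.2 j m hm hT hT0 hs1 (by omega) hj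
  have : (n.choose ij.1 : ℤ) * (T.choose ij.2 : ℤ) * a j
      = (n.choose ij.1 : ℤ) * ((T.choose ij.2 : ℤ) * a j) := by ring
  rw [this]
  exact Dvd.dvd.mul_left hcore _

lemma choose2_int (x : ℕ) : 2 * ((x.choose 2 : ℤ)) = (x:ℤ) ^ 2 - x := by
  induction x with
  | zero => simp
  | succ x IH =>
    have h : (x + 1).choose 2 = x.choose 1 + x.choose 2 := Nat.choose_succ_succ x 1
    rw [h]
    push_cast [Nat.choose_one_right]
    push_cast at IH
    ring_nf
    ring_nf at IH
    linarith

lemma choose3_int (x : ℕ) : 6 * ((x.choose 3 : ℤ)) = (x:ℤ) ^ 3 - 3 * (x:ℤ) ^ 2 + 2 * x := by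
  induction x with
  | zero => simp
  | succ x IH =>
    have h : (x + 1).choose 3 = x.choose 2 + x.choose 3 := Nat.choose_succ_succ x 2
    rw [h]
    have h2 := choose2_int x
    push_cast
    push_cast at IH h2
    ring_nf
    ring_nf at IH h2
    linarith

lemma bracket_dvd (n : ℕ) (c : ℤ)
    (hc : ((n % 4 = 0 ∨ n % 4 = 3) ∧ c = 5) ∨ ((n % 4 = 1 ∨ n % 4 = 2) ∧ c = -3)) :
    (32:ℤ) ∣ (-98 - 6 * c + 264 * (n:ℤ) - 120 * (n:ℤ) ^ 2) := by
  rcases hc with ⟨h4, rfl⟩ | ⟨h4, rfl⟩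
  · rcases h4 with h | h
    · obtain ⟨u, rfl⟩ : ∃ u, n = 4 * u := ⟨n / 4, by omega⟩
      refine ⟨-4 + 33 * u - 60 * (u:ℤ) ^ 2, by push_cast; ring⟩
    · obtain ⟨u, rfl⟩ : ∃ u, n = 4 * u + 3 := ⟨n / 4, by omega⟩
      refine ⟨-13 - 57 * u - 60 * (u:ℤ) ^ 2, by push_cast; ring⟩
  · rcases h4 with h | h
    · obtain ⟨u, rfl⟩ : ∃ u, n = 4 * u + 1 := ⟨n / 4, by omega⟩
      refine ⟨2 + 3 * u - 60 * (u:ℤ) ^ 2, by push_cast; ring⟩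
    · obtain ⟨u, rfl⟩ : ∃ u, n = 4 * u + 2 := ⟨n / 4, by omega⟩
      refine ⟨-1 - 27 * u - 60 * (u:ℤ) ^ 2, by push_cast; ring⟩

lemma main_dvd (n k m : ℕ) (hk : 0 < k) (hm : 4 ≤ m) (c : ℤ)
    (hc : ((n % 4 = 0 ∨ n % 4 = 3) ∧ c = 5) ∨ ((n % 4 = 1 ∨ n % 4 = 2) ∧ c = -3)) :
    (2:ℤ) ^ (m + 4) ∣ (E (n + 2 ^ (m - 1) * k) - E n - c * 2 ^ m * k) := by
  set T := 2 ^ (m - 1) * k with hTdef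
  have hT8 : 8 ≤ T := by
    have h1 : (8:ℕ) = 2 ^ 3 * 1 := by norm_num
    rw [h1, hTdef]
    exact Nat.mul_le_mul (Nat.pow_le_pow_right (by norm_num) (by omega)) hk
  have hTdvd : 2 ^ (m - 1) ∣ T := ⟨k, rfl⟩
  set N := n + T with hNdef
  have hnN : n + 1 ≤ N + 1 := by omega
  -- difference as a sum
  have hEn : E n = ∑ j ∈ range (N + 1), (n.choose j : ℤ) * a j := by
    rw [E_eq_sum_a n]
    apply Finset.sum_subset (Finset.range_subset_range.mpr hnN)
    intro i _ hi
    rw [Finset.mem_range] at hi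
    rw [Nat.choose_eq_zero_of_lt (by omega)]
    simp
  have hdiff : E N - E n = ∑ j ∈ range (N + 1), ((N.choose j : ℤ) - (n.choose j : ℤ)) * a j := by
    rw [E_eq_sum_a N, hEn, ← Finset.sum_sub_distrib]
    apply Finset.sum_congr rfl
    intro j _
    ring
  -- split into small and tail parts
  have hsplit : ∑ j ∈ range (N + 1), ((N.choose j : ℤ) - (n.choose j : ℤ)) * a j
      = (∑ j ∈ range 4, ((N.choose j : ℤ) - (n.choose j : ℤ)) * a j)
        + ∑ j ∈ Ico 4 (N + 1), ((N.choose j : ℤ) - (n.choose j : ℤ)) * a j := by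
    rw [Finset.range_eq_Ico, ← Finset.sum_Ico_consecutive _ (by omega : 0 ≤ 4) (by omega : 4 ≤ N + 1), Finset.range_eq_Ico]
  have htail : (2:ℤ) ^ (m + 4) ∣ ∑ j ∈ Ico 4 (N + 1), ((N.choose j : ℤ) - (n.choose j : ℤ)) * a j := by
    apply Finset.dvd_sum
    intro j hj
    rw [Finset.mem_Ico] at hj
    exact tail_dvd n T j m hm hTdvd (by omega) hj.1
  -- small part explicitly
  have hC2 : (N.choose 2 : ℤ) = (n.choose 2 : ℤ) + (n:ℤ) * (T:ℤ) + (T.choose 2 : ℤ) := by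
    have h := Nat.add_choose_eq n T 2
    have h2 : ∑ ij ∈ Finset.HasAntidiagonal.antidiagonal 2, n.choose ij.1 * T.choose ij.2
        = n.choose 0 * T.choose 2 + n.choose 1 * T.choose 1 + n.choose 2 * T.choose 0 := by
      rw [Finset.Nat.sum_antidiagonal_eq_sum_range_succ_mk]
      simp [Finset.sum_range_succ]
    rw [h2] at h
    have := congrArg (Nat.cast : ℕ → ℤ) h
    push_cast [Nat.choose_one_right, Nat.choose_zero_right] at this
    rw [hNdef]
    push_cast
    linarith
  have hC3 : (N.choose 3 : ℤ) = (n.choose 3 : ℤ) + (n.choose 2 : ℤ) * (T:ℤ)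
      + (n:ℤ) * (T.choose 2 : ℤ) + (T.choose 3 : ℤ) := by
    have h := Nat.add_choose_eq n T 3
    have h2 : ∑ ij ∈ Finset.HasAntidiagonal.antidiagonal 3, n.choose ij.1 * T.choose ij.2
        = n.choose 0 * T.choose 3 + n.choose 1 * T.choose 2 + n.choose 2 * T.choose 1
          + n.choose 3 * T.choose 0 := by
      rw [Finset.Nat.sum_antidiagonal_eq_sum_range_succ_mk]
      simp [Finset.sum_range_succ]
    rw [h2] at h
    have := congrArg (Nat.cast : ℕ → ℤ) h
    push_cast [Nat.choose_one_right, Nat.choose_zero_right] at this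
    rw [hNdef]
    push_cast
    linarith
  have hsmall : ∑ j ∈ range 4, ((N.choose j : ℤ) - (n.choose j : ℤ)) * a j
      = (T:ℤ) * (-2) + ((n:ℤ) * (T:ℤ) + (T.choose 2 : ℤ)) * 8
        + ((n.choose 2 : ℤ) * (T:ℤ) + (n:ℤ) * (T.choose 2 : ℤ) + (T.choose 3 : ℤ)) * (-80) := by
    rw [Finset.sum_range_succ, Finset.sum_range_succ, Finset.sum_range_succ,
      Finset.sum_range_one]
    rw [a_zero, a_one, a_two, a_three, hC2, hC3]
    simp [Nat.choose_one_right, hNdef]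
    push_cast
    ring
  -- the X part
  set t : ℤ := (T:ℤ) with htdef
  have ht : t = 2 ^ (m - 1) * (k:ℤ) := by rw [htdef, hTdef]; push_cast; ring
  set X : ℤ := t * (-2) + ((n:ℤ) * t + (T.choose 2 : ℤ)) * 8
        + ((n.choose 2 : ℤ) * t + (n:ℤ) * (T.choose 2 : ℤ) + (T.choose 3 : ℤ)) * (-80)
        - c * 2 ^ m * k with hXdef
  have hQ2 := choose2_int T
  have hQ3 := choose3_int T
  have hc2 := choose2_int n
  have h2m : (2:ℤ) ^ m = 2 * 2 ^ (m - 1) := by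
    rw [← pow_succ']; congr 1; omega
  have h3X : 3 * X = t * (-98 - 6 * c + 264 * (n:ℤ) - 120 * (n:ℤ) ^ 2)
      + 4 * t ^ 2 * (33 - 30 * (n:ℤ)) - 40 * t ^ 3 := by
    rw [hXdef, h2m]
    linear_combination (12 - 120 * (n:ℤ)) * hQ2 + (-40) * hQ3 + (-120 * t) * hc2 + (6 * c) * ht
  have hd1 : (2:ℤ) ^ (m + 4) ∣ t * (-98 - 6 * c + 264 * (n:ℤ) - 120 * (n:ℤ) ^ 2) := by
    obtain ⟨w, hw⟩ := bracket_dvd n c hc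
    refine ⟨(k:ℤ) * w, ?_⟩
    rw [hw, ht]
    have hp : (2:ℤ) ^ (m + 4) = 2 ^ (m - 1) * 32 := by
      rw [show (32:ℤ) = 2 ^ 5 by norm_num, ← pow_add]
      congr 1; omega
    rw [hp]; ring
  have hd2 : (2:ℤ) ^ (m + 4) ∣ 4 * t ^ 2 * (33 - 30 * (n:ℤ)) := by
    have h1 : 4 * t ^ 2 = 2 ^ (2 * m) * (k:ℤ) ^ 2 := by
      rw [ht]
      have : ((2:ℤ) ^ (m - 1)) ^ 2 = 2 ^ (2 * m - 2) := by
        rw [← pow_mul]; congr 1; omega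
      rw [mul_pow, this, show (4:ℤ) = 2 ^ 2 by norm_num, ← mul_assoc, ← pow_add]
      congr 2
      omega
    refine Dvd.dvd.mul_right ?_ _
    rw [h1]
    exact Dvd.dvd.mul_right (pow_dvd_pow 2 (by omega)) _
  have hd3 : (2:ℤ) ^ (m + 4) ∣ 40 * t ^ 3 := by
    have h1 : t ^ 3 = 2 ^ (3 * m - 3) * (k:ℤ) ^ 3 := by
      rw [ht, mul_pow, ← pow_mul]
      congr 2
      omega
    rw [h1]
    have h2 : (2:ℤ) ^ (m + 4) ∣ 2 ^ (3 * m - 3) := pow_dvd_pow 2 (by omega)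
    exact Dvd.dvd.mul_left (Dvd.dvd.mul_right h2 _) _
  have h3Xdvd : (2:ℤ) ^ (m + 4) ∣ 3 * X := by
    rw [h3X]
    exact dvd_sub (dvd_add hd1 hd2) hd3
  have hXdvd : (2:ℤ) ^ (m + 4) ∣ X := by
    have hcop : IsCoprime ((2:ℤ) ^ (m + 4)) 3 := by
      apply IsCoprime.pow_left
      rw [Int.isCoprime_iff_gcd_eq_one]
      decide
    exact hcop.dvd_of_dvd_mul_left h3Xdvd
  -- assemble
  have hfinal : E N - E n - c * 2 ^ m * k
      = X + ∑ j ∈ Ico 4 (N + 1), ((N.choose j : ℤ) - (n.choose j : ℤ)) * a j := by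
    rw [hdiff, hsplit, hsmall, hXdef]
    ring
  rw [hfinal]
  exact dvd_add hXdvd htail


end Stern

theorem stern_congruence_m_ge_four (b k m : ℕ) (hb : Even b) (hk : 0 < k) (hm : 4 ≤ m) :
    ((b % 8 = 0 ∨ b % 8 = 6) →
      eulerE (2 ^ m * k + b) ≡ eulerE b + 5 * 2 ^ m * k [ZMOD 2 ^ (m + 4)]) ∧
    ((b % 8 = 2 ∨ b % 8 = 4) →
      eulerE (2 ^ m * k + b) ≡ eulerE b - 3 * 2 ^ m * k [ZMOD 2 ^ (m + 4)]) := by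
  obtain ⟨r, hr⟩ := hb
  have hb2 : b = 2 * r := by omega
  have hpow : (2:ℕ) ^ m = 2 * 2 ^ (m - 1) := by
    rw [← pow_succ']; congr 1; omega
  have hidx : 2 ^ m * k + b = 2 * (r + 2 ^ (m - 1) * k) := by
    rw [hb2, hpow]; ring
  have hEN : eulerE (2 ^ m * k + b) = Stern.E (r + 2 ^ (m - 1) * k) := by rw [hidx]; rfl
  have hEn : eulerE b = Stern.E r := by rw [hb2]; rfl
  constructor
  · intro h8
    have hmod : r % 4 = 0 ∨ r % 4 = 3 := by omega
    have hd := Stern.main_dvd r k m hk hm 5 (Or.inl ⟨hmod, rfl⟩)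
    rw [hEN, hEn]
    apply Int.ModEq.symm
    rw [Int.modEq_iff_dvd]
    convert hd using 1
    push_cast
    ring
  · intro h8
    have hmod : r % 4 = 1 ∨ r % 4 = 2 := by omega
    have hd := Stern.main_dvd r k m hk hm (-3) (Or.inr ⟨hmod, rfl⟩)
    rw [hEN, hEn]
    apply Int.ModEq.symm
    rw [Int.modEq_iff_dvd]
    convert hd using 1
    push_cast
    ring
end

section
/- Let b be a nonnegative even integer. Then (3^{b+1} + 1)/4 · E_b ≡ 40b^2 - 84b + 1 (mod 2^{9}). -/
open Finset


lemma choose_cast (m : ℕ) :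
    ((m.choose 1 : ℤ) = m) ∧ (2*(m.choose 2 : ℤ) = m*(m-1)) ∧
    (6*(m.choose 3 : ℤ) = m*(m-1)*(m-2)) ∧ (24*(m.choose 4 : ℤ) = m*(m-1)*(m-2)*(m-3)) ∧
    (120*(m.choose 5 : ℤ) = m*(m-1)*(m-2)*(m-3)*(m-4)) := by
  induction m with
  | zero => norm_num
  | succ m ih =>
    obtain ⟨h1, h2, h3, h4, h5⟩ := ih
    have e1 : (m+1).choose 1 = m.choose 0 + m.choose 1 := Nat.choose_succ_succ m 0
    have e2 : (m+1).choose 2 = m.choose 1 + m.choose 2 := Nat.choose_succ_succ m 1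
    have e3 : (m+1).choose 3 = m.choose 2 + m.choose 3 := Nat.choose_succ_succ m 2
    have e4 : (m+1).choose 4 = m.choose 3 + m.choose 4 := Nat.choose_succ_succ m 3
    have e5 : (m+1).choose 5 = m.choose 4 + m.choose 5 := Nat.choose_succ_succ m 4
    refine ⟨?_, ?_, ?_, ?_, ?_⟩
    · rw [e1]; push_cast [Nat.choose_zero_right]; linear_combination h1
    · rw [e2]; push_cast; linear_combination 2*h1 + h2
    · rw [e3]; push_cast; linear_combination 3*h2 + h3
    · rw [e4]; push_cast; linear_combination 4*h3 + h4
    · rw [e5]; push_cast; linear_combination 5*h4 + h5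

-- sum over a parity class of binomial coefficients
lemma sum_choose_parity (m p : ℕ) (hm : 1 ≤ m) :
    ∑ k ∈ range (m+1), (if k % 2 = p % 2 then ((m.choose k : ℤ)) else 0) = 2^(m-1) := by
  have h1 : ∑ k ∈ range (m+1), ((m.choose k : ℤ)) = 2^m := by
    exact_mod_cast congrArg (Nat.cast : ℕ → ℤ) (Nat.sum_range_choose m)
  have h2 : ∑ k ∈ range (m+1), (-1:ℤ)^k * m.choose k = 0 :=
    Int.alternating_sum_range_choose_of_ne (by omega)
  have key : (2:ℤ) * ∑ k ∈ range (m+1), (if k % 2 = p % 2 then ((m.choose k : ℤ)) else 0)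
      = ∑ k ∈ range (m+1), (((m.choose k : ℤ)) + (-1)^(k+p) * m.choose k) := by
    rw [Finset.mul_sum]
    refine Finset.sum_congr rfl ?_
    intro k _
    rcases Nat.even_or_odd (k+p) with he | ho
    · have hkp : k % 2 = p % 2 := by
        rcases he with ⟨c, hc⟩; omega
      rw [if_pos hkp, he.neg_one_pow]; ring
    · have hkp : ¬ (k % 2 = p % 2) := by
        rcases ho with ⟨c, hc⟩; omega
      rw [if_neg hkp, ho.neg_one_pow]; ring
  have h3 : ∑ k ∈ range (m+1), (((m.choose k : ℤ)) + (-1)^(k+p) * m.choose k)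
      = 2^m + (-1)^p * 0 := by
    rw [Finset.sum_add_distrib, h1, ← h2, Finset.mul_sum]
    congr 1
    refine Finset.sum_congr rfl ?_
    intro k _
    rw [pow_add]; ring
  have h4 : (2:ℤ)^m = 2 * 2^(m-1) := by
    rw [← pow_succ']
    congr 1
    omega
  rw [h3, h4] at key
  linarith

-- key binomial identity
lemma key_sum (n j : ℕ) (hj : j < 2*n) :
    ∑ r ∈ range (n+1), ((2*n).choose (2*r) : ℤ) * ((2*r).choose j)
      = (2*n).choose j * 2^(2*n-1-j) := by
  have step1 : ∀ r ∈ range (n+1), ((2*n).choose (2*r) : ℤ) * ((2*r).choose j)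
      = ((2*n).choose j : ℤ) * (if j ≤ 2*r then (((2*n-j).choose (2*r-j) : ℤ)) else 0) := by
    intro r hr
    simp only [mem_range] at hr
    by_cases h : j ≤ 2*r
    · rw [if_pos h]
      have := Nat.choose_mul (n := 2*n) h
      exact_mod_cast congrArg (Nat.cast : ℕ → ℤ) this
    · rw [if_neg h, Nat.choose_eq_zero_of_lt (show 2*r < j by omega)]
      push_cast; ring
  rw [Finset.sum_congr rfl step1, ← Finset.mul_sum]
  have reindex : ∑ r ∈ range (n+1), (if j ≤ 2*r then (((2*n-j).choose (2*r-j) : ℤ)) else 0)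
      = ∑ k ∈ range (2*n-j+1), (if k % 2 = j % 2 then (((2*n-j).choose k : ℤ)) else 0) := by
    rw [← Finset.sum_filter, ← Finset.sum_filter]
    refine Finset.sum_nbij' (fun r => 2*r - j) (fun k => (k+j)/2) ?_ ?_ ?_ ?_ ?_
    · intro r hr; simp only [mem_filter, mem_range] at hr ⊢; omega
    · intro k hk; simp only [mem_filter, mem_range] at hk ⊢; omega
    · intro r hr; simp only [mem_filter, mem_range] at hr
      show (2*r - j + j)/2 = r; omega
    · intro k hk; simp only [mem_filter, mem_range] at hk
      show 2*((k + j)/2) - j = k; omega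
    · intro r hr
      simp only [mem_filter, mem_range] at hr
      congr 1
  rw [reindex, sum_choose_parity _ _ (by omega)]
  have : 2*n - j - 1 = 2*n - 1 - j := by omega
  rw [this]

lemma eulerE_succ_succ (k : ℕ) :
    eulerE (2*k+2) = -∑ r ∈ range (k+1), ((2*k+2).choose (2*r) : ℤ) * eulerE (2*r) := by
  rw [eulerE]
  rw [if_pos (even_two_mul k)]
  rw [Nat.mul_div_cancel_left k (by norm_num)]
  rw [Finset.sum_attach (range (k+1)) (fun r => ((2*k+2).choose (2*r) : ℤ) * eulerE (2*r))]

lemma eulerE_vals : eulerE 0 = 1 ∧ eulerE 2 = -1 ∧ eulerE 4 = 5 ∧ eulerE 6 = -61 ∧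
    eulerE 8 = 1385 ∧ eulerE 10 = -50521 ∧ eulerE 12 = 2702765 ∧ eulerE 14 = -199360981 := by
  have h0 : eulerE 0 = 1 := by rw [eulerE]
  have h2 : eulerE 2 = -1 := by
    rw [show (2:ℕ) = 2*0+2 by norm_num, eulerE_succ_succ]
    simp [Finset.sum_range_succ, h0]
  have h4 : eulerE 4 = 5 := by
    rw [show (4:ℕ) = 2*1+2 by norm_num, eulerE_succ_succ]
    simp only [Finset.sum_range_succ, Finset.sum_range_zero]
    norm_num [h0, h2, Nat.choose]
  have h6 : eulerE 6 = -61 := by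
    rw [show (6:ℕ) = 2*2+2 by norm_num, eulerE_succ_succ]
    simp only [Finset.sum_range_succ, Finset.sum_range_zero]
    norm_num [h0, h2, h4, Nat.choose]
  have h8 : eulerE 8 = 1385 := by
    rw [show (8:ℕ) = 2*3+2 by norm_num, eulerE_succ_succ]
    simp only [Finset.sum_range_succ, Finset.sum_range_zero]
    norm_num [h0, h2, h4, h6, Nat.choose]
  have h10 : eulerE 10 = -50521 := by
    rw [show (10:ℕ) = 2*4+2 by norm_num, eulerE_succ_succ]
    simp only [Finset.sum_range_succ, Finset.sum_range_zero]
    norm_num [h0, h2, h4, h6, h8, Nat.choose]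
  have h12 : eulerE 12 = 2702765 := by
    rw [show (12:ℕ) = 2*5+2 by norm_num, eulerE_succ_succ]
    simp only [Finset.sum_range_succ, Finset.sum_range_zero]
    norm_num [h0, h2, h4, h6, h8, h10, Nat.choose]
  have h14 : eulerE 14 = -199360981 := by
    rw [show (14:ℕ) = 2*6+2 by norm_num, eulerE_succ_succ]
    simp only [Finset.sum_range_succ, Finset.sum_range_zero]
    norm_num [h0, h2, h4, h6, h8, h10, h12, Nat.choose]
  exact ⟨h0, h2, h4, h6, h8, h10, h12, h14⟩

def Ppoly (n : ℕ) : ℤ :=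
  1 + 2666*(n:ℤ) - 8708*(n:ℤ)^2 + 12232*(n:ℤ)^3 - 7184*(n:ℤ)^4 + 1504*(n:ℤ)^5


lemma Ppoly_binom (r : ℕ) : Ppoly r =
    ((2*r).choose 0 : ℤ) + 283*((2*r).choose 1) - 56*((2*r).choose 2)
      + 60*((2*r).choose 3) + 504*((2*r).choose 4) + 5640*((2*r).choose 5) := by
  obtain ⟨h1, h2, h3, h4, h5⟩ := choose_cast (2*r)
  rw [Nat.choose_zero_right]
  push_cast at h1 h2 h3 h4 h5 ⊢
  unfold Ppoly
  push_cast
  linear_combination -283*h1 + 28*h2 - 10*h3 - 21*h4 - 47*h5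

lemma sum_P (n : ℕ) (hn : 8 ≤ n) :
    (512:ℤ) ∣ ∑ r ∈ range (n+1), ((2*n).choose (2*r) : ℤ) * Ppoly r := by
  have expand : ∀ r ∈ range (n+1), ((2*n).choose (2*r) : ℤ) * Ppoly r
      = ((2*n).choose (2*r) : ℤ) * ((2*r).choose 0)
        + 283*(((2*n).choose (2*r) : ℤ) * ((2*r).choose 1))
        - 56*(((2*n).choose (2*r) : ℤ) * ((2*r).choose 2))
        + 60*(((2*n).choose (2*r) : ℤ) * ((2*r).choose 3))
        + 504*(((2*n).choose (2*r) : ℤ) * ((2*r).choose 4))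
        + 5640*(((2*n).choose (2*r) : ℤ) * ((2*r).choose 5)) := by
    intro r _
    rw [Ppoly_binom r]; ring
  rw [Finset.sum_congr rfl expand]
  simp only [Finset.sum_add_distrib, Finset.sum_sub_distrib, ← Finset.mul_sum]
  rw [key_sum n 0 (by omega), key_sum n 1 (by omega), key_sum n 2 (by omega),
    key_sum n 3 (by omega), key_sum n 4 (by omega), key_sum n 5 (by omega)]
  have p0 : (2:ℤ)^(2*n-1-0) = 2^9 * 2^(2*n-10) := by rw [← pow_add]; congr 1; omega
  have p1 : (2:ℤ)^(2*n-1-1) = 2^9 * 2^(2*n-11) := by rw [← pow_add]; congr 1; omega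
  have p2 : (2:ℤ)^(2*n-1-2) = 2^9 * 2^(2*n-12) := by rw [← pow_add]; congr 1; omega
  have p3 : (2:ℤ)^(2*n-1-3) = 2^9 * 2^(2*n-13) := by rw [← pow_add]; congr 1; omega
  have p4 : (2:ℤ)^(2*n-1-4) = 2^9 * 2^(2*n-14) := by rw [← pow_add]; congr 1; omega
  have p5 : (2:ℤ)^(2*n-1-5) = 2^9 * 2^(2*n-15) := by rw [← pow_add]; congr 1; omega
  rw [p0, p1, p2, p3, p4, p5]
  refine ⟨((2*n).choose 0 : ℤ) * 2^(2*n-10) + 283*(((2*n).choose 1 : ℤ) * 2^(2*n-11))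
    - 56*(((2*n).choose 2 : ℤ) * 2^(2*n-12)) + 60*(((2*n).choose 3 : ℤ) * 2^(2*n-13))
    + 504*(((2*n).choose 4 : ℤ) * 2^(2*n-14)) + 5640*(((2*n).choose 5 : ℤ) * 2^(2*n-15)), ?_⟩
  ring

lemma eulerE_eq_P (n : ℕ) : (512:ℤ) ∣ eulerE (2*n) - Ppoly n := by
  induction n using Nat.strong_induction_on with
  | _ n ih =>
  by_cases hn : n < 8
  · obtain ⟨h0, h2, h4, h6, h8, h10, h12, h14⟩ := eulerE_vals
    interval_cases n <;> simp +arith +decide [Ppoly, h0, h2, h4, h6, h8, h10, h12, h14] <;> decide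
  · push_neg at hn
    have hrec : eulerE (2*n) = -∑ r ∈ range n, ((2*n).choose (2*r) : ℤ) * eulerE (2*r) := by
      have h := eulerE_succ_succ (n-1)
      rw [show 2*(n-1)+2 = 2*n by omega, show n-1+1 = n by omega] at h
      exact h
    have key := sum_P n hn
    have hsum : eulerE (2*n) - Ppoly n
        = -(∑ r ∈ range n, ((2*n).choose (2*r) : ℤ) * (eulerE (2*r) - Ppoly r))
          - ∑ r ∈ range (n+1), ((2*n).choose (2*r) : ℤ) * Ppoly r := by
      rw [hrec, Finset.sum_range_succ, Nat.choose_self]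
      have hd : ∑ r ∈ range n, ((2*n).choose (2*r) : ℤ) * (eulerE (2*r) - Ppoly r)
          = (∑ r ∈ range n, ((2*n).choose (2*r) : ℤ) * eulerE (2*r))
            - ∑ r ∈ range n, ((2*n).choose (2*r) : ℤ) * Ppoly r := by
        rw [← Finset.sum_sub_distrib]
        exact Finset.sum_congr rfl fun r _ => mul_sub _ _ _
      rw [hd]
      push_cast
      ring
    rw [hsum]
    apply dvd_sub
    · rw [dvd_neg]
      exact Finset.dvd_sum fun r hr => Dvd.dvd.mul_left (ih r (mem_range.mp hr)) _
    · exact key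

lemma sigma_pow (n : ℕ) :
    (2048:ℤ) ∣ 3^(2*n+1) + 1 - (4 + 24*(n:ℤ) + 96*n*(n-1) + 256*n*(n-1)*(n-2)) := by
  induction n with
  | zero => norm_num
  | succ n ih =>
    obtain ⟨w, hw⟩ := ih
    refine ⟨9*w + (n:ℤ)*(n-1)*(n-2), ?_⟩
    push_cast at hw ⊢
    linear_combination 9*hw

theorem scaled_eulerE_mod_512 (b : ℕ) (hb : Even b) :
    ((3 ^ (b + 1) + 1 : ℤ) / 4) * eulerE b ≡
      40 * (b : ℤ) ^ 2 - 84 * b + 1 [ZMOD 2 ^ 9] := by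
  obtain ⟨n, hn⟩ := hb
  subst hn
  have hb2 : n + n = 2*n := by ring
  rw [hb2]
  obtain ⟨k, hk⟩ := eulerE_eq_P n
  obtain ⟨m, hm⟩ := sigma_pow n
  obtain ⟨t, ht⟩ := Int.even_mul_succ_self ((n:ℤ)-1)
  obtain ⟨u, hu⟩ : (8:ℤ) ∣ (n:ℤ)*(n-1)*(n-2)*(n-3) := by
    obtain ⟨q, hq⟩ : ∃ q, n = 4*q ∨ n = 4*q+1 ∨ n = 4*q+2 ∨ n = 4*q+3 := ⟨n/4, by omega⟩
    rcases hq with h | h | h | h <;> subst h <;> push_cast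
    · exact ⟨(q:ℤ)*(4*q-1)*(2*q-1)*(4*q-3), by ring⟩
    · exact ⟨((4*q+1):ℤ)*q*(4*q-1)*(2*q-1), by push_cast; ring⟩
    · exact ⟨((2*q+1):ℤ)*(4*q+1)*q*(4*q-1), by push_cast; ring⟩
    · exact ⟨((4*q+3):ℤ)*(2*q+1)*(4*q+1)*q, by push_cast; ring⟩
  have h4 : (4:ℤ) ∣ 3^(2*n+1) + 1 := by
    refine ⟨1 + 6*(n:ℤ) + 24*n*(n-1) + 64*n*(n-1)*(n-2) + 512*m, ?_⟩
    linear_combination hm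
  have hc : ((3^(2*n+1)+1 : ℤ)/4) * 4 = 3^(2*n+1)+1 := Int.ediv_mul_cancel h4
  have h2048 : (2048:ℤ) ∣ (3^(2*n+1)+1) * eulerE (2*n) - (640*(n:ℤ)^2 - 672*n + 4) := by
    unfold Ppoly at hk
    refine ⟨(188*(n:ℤ)^8 - 181*n + t*(-2783*(n:ℤ)^5 + 239297*n - 437121)
        + u*(22543*(n:ℤ)^2 + 82117*n + 291165))
      + (1 + 6*(n:ℤ) + 24*n*(n-1) + 64*n*(n-1)*(n-2))*k
      + m*(1 + 2666*(n:ℤ) - 8708*(n:ℤ)^2 + 12232*(n:ℤ)^3 - 7184*(n:ℤ)^4 + 1504*(n:ℤ)^5) + 512*m*k, ?_⟩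
    linear_combination (3^(2*n+1)+1 : ℤ) * hk + ((1 + 2666*(n:ℤ) - 8708*(n:ℤ)^2 + 12232*(n:ℤ)^3 - 7184*(n:ℤ)^4 + 1504*(n:ℤ)^5) + 512*k) * hm
      + (1024*(-2783*(n:ℤ)^5 + 239297*n - 437121)) * ht
      + (256*(22543*(n:ℤ)^2 + 82117*n + 291165)) * hu
  obtain ⟨w, hw⟩ := h2048
  rw [Int.modEq_iff_dvd]
  refine ⟨-w, ?_⟩
  have expand : 4 * (((3^(2*n+1)+1 : ℤ)/4) * eulerE (2*n) - (40*(2*(n:ℤ))^2 - 84*(2*n) + 1))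
      = (3^(2*n+1)+1) * eulerE (2*n) - (640*(n:ℤ)^2 - 672*n + 4) := by
    push_cast
    linear_combination eulerE (2*n) * hc
  have : (4:ℤ) * (((3^(2*n+1)+1 : ℤ)/4) * eulerE (2*n) - (40*(2*(n:ℤ))^2 - 84*(2*n) + 1))
      = 4 * (2^9 * w) := by
    rw [expand, hw]; ring
  have h4c := mul_left_cancel₀ (show (4:ℤ) ≠ 0 by norm_num) this
  push_cast at h4c ⊢
  linear_combination -h4c
end

section
/- Let b be a nonnegative even integer. Then 3·(3^{b+1}+1)/4·E_b − 4·(3^{b+3}+1)/4·E_{b+2} + (3^{b+5}+1)/4·E_{b+4} ≡ −176 − 64b (mod 2^{9}). -/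
namespace EulerModAux

open PowerSeries Finset

noncomputable section

local notation "D" => d⁄dX ℚ

/-! ### combinatorial facts about eulerE -/

lemma eulerE_odd (n : ℕ) (h : ¬ Even n) : eulerE n = 0 := by
  match n with
  | 0 => exact absurd Even.zero h
  | 1 => rw [eulerE]
  | n + 2 =>
    rw [eulerE]
    have : ¬ Even n := by rw [Nat.even_iff] at h ⊢; omega
    simp [this]

lemma eulerE_rec (n : ℕ) (h : Even n) :
    eulerE (n + 2) = -∑ r ∈ Finset.range (n / 2 + 1),
      ((n + 2).choose (2 * r) : ℤ) * eulerE (2 * r) := by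
  rw [eulerE, if_pos h,
    ← Finset.sum_attach (Finset.range (n/2+1))
      (fun r => ((n + 2).choose (2 * r) : ℤ) * eulerE (2 * r))]

lemma sum_even_ite (g : ℕ → ℤ) (K : ℕ) :
    ∑ k ∈ range (2 * K + 1), (if Even k then g k else 0) = ∑ r ∈ range (K + 1), g (2 * r) := by
  induction K with
  | zero => simp
  | succ m ih =>
    have h1 : 2 * (m + 1) + 1 = (2 * m + 1) + 1 + 1 := by ring
    rw [h1, Finset.sum_range_succ, Finset.sum_range_succ, ih, Finset.sum_range_succ]
    have hodd : ¬ Even (2 * m + 1) := by simp [parity_simps]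
    have heven : Even (2 * m + 1 + 1) := by simp [parity_simps]
    rw [if_neg hodd, if_pos heven]
    have h2 : 2 * m + 1 + 1 = 2 * (m + 1) := by ring
    rw [h2]
    conv_rhs => rw [Finset.sum_range_succ, Finset.sum_range_succ]
    ring

lemma eulerE_sum (n : ℕ) :
    ∑ k ∈ range (n + 1), (n.choose k : ℤ) * eulerE k * (1 + (-1) ^ (n - k)) =
      if n = 0 then 2 else 0 := by
  rcases Nat.even_or_odd n with he | ho
  · rcases he with ⟨K, hK⟩
    have hn : n = 2 * K := by omega
    subst hn
    rcases Nat.eq_zero_or_pos K with h0 | hpos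
    · subst h0; simp [eulerE]
    have hstep : ∀ k ∈ range (2 * K + 1),
        ((2*K).choose k : ℤ) * eulerE k * (1 + (-1) ^ (2*K - k)) =
        (if Even k then 2 * ((2*K).choose k : ℤ) * eulerE k else 0) := by
      intro k hk
      rw [Finset.mem_range] at hk
      by_cases hev : Even k
      · rw [if_pos hev]
        have : Even (2*K - k) := by
          rcases hev with ⟨c, hc⟩
          exact ⟨K - c, by omega⟩
        rw [this.neg_one_pow]
        ring
      · rw [if_neg hev, eulerE_odd k hev]
        ring
    rw [Finset.sum_congr rfl hstep, sum_even_ite (fun k => 2 * ((2*K).choose k : ℤ) * eulerE k) K]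
    have hrec := eulerE_rec (2 * (K - 1)) ⟨K - 1, by ring⟩
    have h2 : 2 * (K - 1) + 2 = 2 * K := by omega
    have h3 : 2 * (K - 1) / 2 + 1 = K := by omega
    rw [h2, h3] at hrec
    rw [if_neg (by omega : ¬ 2 * K = 0)]
    rw [Finset.sum_range_succ]
    have hS : ∑ r ∈ range K, ((2*K).choose (2*r) : ℤ) * eulerE (2*r) = - eulerE (2*K) := by
      linarith [hrec]
    have hmul : ∑ x ∈ range K, 2 * ((2*K).choose (2*x) : ℤ) * eulerE (2*x)
        = 2 * ∑ x ∈ range K, ((2*K).choose (2*x) : ℤ) * eulerE (2*x) := by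
      rw [Finset.mul_sum]; exact Finset.sum_congr rfl fun r _ => by ring
    rw [hmul, hS, Nat.choose_self]
    push_cast
    ring
  · rw [if_neg (by rcases ho with ⟨c,hc⟩; omega)]
    apply Finset.sum_eq_zero
    intro k hk
    by_cases hev : Even k
    · have : ¬ Even (n - k) := by
        rw [Finset.mem_range] at hk
        rcases hev with ⟨c, hc⟩; rcases ho with ⟨d, hd⟩
        intro ⟨e, he⟩; omega
      rw [(Nat.not_even_iff_odd.mp this).neg_one_pow]
      ring
    · rw [eulerE_odd k hev]; ring

/-! ### EGF values -/

def vE (n : ℕ) (f : ℚ⟦X⟧) : ℚ := (n.factorial : ℚ) * PowerSeries.coeff n f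

lemma vE_add (n : ℕ) (f g : ℚ⟦X⟧) : vE n (f + g) = vE n f + vE n g := by
  simp [vE, mul_add]

lemma vE_sub (n : ℕ) (f g : ℚ⟦X⟧) : vE n (f - g) = vE n f - vE n g := by
  simp [vE, mul_sub]

lemma vE_Cmul (q : ℚ) (n : ℕ) (f : ℚ⟦X⟧) : vE n (PowerSeries.C (R := ℚ) q * f) = q * vE n f := by
  simp [vE]; ring

lemma vE_nmul (k : ℕ) [k.AtLeastTwo] (n : ℕ) (f : ℚ⟦X⟧) :
    vE n ((OfNat.ofNat k : ℚ⟦X⟧) * f) = (OfNat.ofNat k : ℚ) * vE n f := by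
  rw [show (OfNat.ofNat k : ℚ⟦X⟧) = PowerSeries.C (R := ℚ) (OfNat.ofNat k) from (map_ofNat _ k).symm,
    vE_Cmul]

lemma vE_C (q : ℚ) (n : ℕ) : vE n (PowerSeries.C (R := ℚ) q) = if n = 0 then q else 0 := by
  rw [vE, PowerSeries.coeff_C]
  split <;> simp_all

lemma vE_num (k : ℕ) [k.AtLeastTwo] (n : ℕ) :
    vE n (OfNat.ofNat k : ℚ⟦X⟧) = if n = 0 then (OfNat.ofNat k : ℚ) else 0 := by
  rw [show (OfNat.ofNat k : ℚ⟦X⟧) = PowerSeries.C (R := ℚ) (OfNat.ofNat k) from (map_ofNat _ k).symm,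
    vE_C]

lemma vE_mul (n : ℕ) (f g : ℚ⟦X⟧) :
    vE n (f * g) = ∑ k ∈ range (n + 1), (n.choose k : ℚ) * (vE k f * vE (n - k) g) := by
  rw [vE, PowerSeries.coeff_mul, Finset.Nat.sum_antidiagonal_eq_sum_range_succ_mk, mul_sum]
  refine Finset.sum_congr rfl fun k hk => ?_
  rw [Finset.mem_range] at hk
  have hkn : k ≤ n := by omega
  have h : (n.choose k : ℚ) * (k.factorial : ℚ) * ((n - k).factorial : ℚ) = (n.factorial : ℚ) := by
    rw_mod_cast [Nat.choose_mul_factorial_mul_factorial hkn]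
  rw [vE, vE, ← h]
  ring

lemma vE_D (n : ℕ) (f : ℚ⟦X⟧) : vE n (D f) = vE (n + 1) f := by
  rw [vE, vE, PowerSeries.coeff_derivative, Nat.factorial_succ]
  push_cast
  ring

lemma ext_vE {f g : ℚ⟦X⟧} (h : ∀ n, vE n f = vE n g) : f = g := by
  ext n
  have h2 := h n
  rw [vE, vE] at h2
  have hf : (n.factorial : ℚ) ≠ 0 := by positivity
  exact mul_left_cancel₀ hf h2

/-! ### exponential series -/

def Ek (a : ℚ) : ℚ⟦X⟧ := rescale a (PowerSeries.exp ℚ)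

lemma vE_Ek (a : ℚ) (n : ℕ) : vE n (Ek a) = a ^ n := by
  rw [vE, Ek, coeff_rescale, PowerSeries.coeff_exp]
  have hf : (n.factorial : ℚ) ≠ 0 := by positivity
  simp only [Algebra.algebraMap_self, RingHom.id_apply]
  field_simp

lemma Ek_mul (a b : ℚ) : Ek a * Ek b = Ek (a + b) := PowerSeries.exp_mul_exp_eq_exp_add a b

lemma Ek_pow (a : ℚ) (m : ℕ) : (Ek a) ^ m = Ek (m * a) := by
  induction m with
  | zero =>
    simp only [pow_zero, Nat.cast_zero, zero_mul]
    ext n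
    rw [Ek, coeff_rescale, PowerSeries.coeff_exp]
    cases n with
    | zero => simp
    | succ m => simp [PowerSeries.coeff_one]
  | succ k ih =>
    rw [pow_succ, ih, Ek_mul]
    congr 1
    push_cast
    ring

lemma D_Ek (a : ℚ) : D (Ek a) = PowerSeries.C (R := ℚ) a * Ek a := by
  ext n
  rw [PowerSeries.coeff_derivative, Ek, coeff_rescale, PowerSeries.coeff_exp,
    PowerSeries.coeff_C_mul, coeff_rescale, PowerSeries.coeff_exp, Nat.factorial_succ]
  have h1 : ((n+1).factorial : ℚ) ≠ 0 := by positivity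
  simp only [Algebra.algebraMap_self, RingHom.id_apply]
  field_simp [Nat.factorial_succ]
  push_cast
  ring

lemma vE_X_mul (n : ℕ) (f : ℚ⟦X⟧) :
    vE n (PowerSeries.X * f) = n * vE (n - 1) f := by
  cases n with
  | zero => simp [vE]
  | succ m =>
    rw [vE, PowerSeries.coeff_succ_X_mul, vE, Nat.factorial_succ]
    rw [Nat.add_sub_cancel]
    push_cast
    ring

def uu : ℚ⟦X⟧ := Ek 1
def vv : ℚ⟦X⟧ := Ek (-1)

lemma huv : uu * vv = 1 := by
  rw [uu, vv, Ek_mul]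
  norm_num
  have := Ek_pow 1 0
  simpa [Ek] using this.symm

lemma hDu : D uu = uu := by rw [uu, D_Ek]; simp

lemma hDv : D vv = -vv := by
  rw [vv, D_Ek]
  have : PowerSeries.C (R := ℚ) (-1) = -1 := by simp
  rw [this]; ring

lemma uu_pow (n : ℕ) : uu ^ n = Ek n := by rw [uu, Ek_pow]; norm_num

lemma vv_pow (n : ℕ) : vv ^ n = Ek (-n) := by rw [vv, Ek_pow]; norm_num

/-! ### the Euler series -/

def Eeuler : ℚ⟦X⟧ := PowerSeries.mk fun n => (eulerE n : ℚ) / n.factorial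

lemma vE_Eeuler (n : ℕ) : vE n Eeuler = (eulerE n : ℚ) := by
  rw [vE, Eeuler, PowerSeries.coeff_mk]
  have hf : (n.factorial : ℚ) ≠ 0 := by positivity
  field_simp

lemma hEcc : Eeuler * (uu + vv) = 2 := by
  apply ext_vE
  intro n
  rw [vE_mul, vE_num]
  have hterm : ∀ k ∈ range (n+1), (n.choose k : ℚ) * (vE k Eeuler * vE (n-k) (uu + vv))
      = ((n.choose k : ℤ) * eulerE k * (1 + (-1) ^ (n - k)) : ℤ) := by
    intro k hk
    rw [vE_Eeuler, vE_add, uu, vv, vE_Ek, vE_Ek]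
    push_cast
    ring
  rw [Finset.sum_congr rfl hterm]
  rw [← Int.cast_sum]
  rw [eulerE_sum n]
  split <;> norm_num

def E3 : ℚ⟦X⟧ := rescale 3 Eeuler

lemma vE_E3 (n : ℕ) : vE n E3 = ((3^n * eulerE n : ℤ) : ℚ) := by
  rw [vE, E3, coeff_rescale]
  have h := vE_Eeuler n
  rw [vE] at h
  push_cast
  calc (n.factorial : ℚ) * (3 ^ n * (PowerSeries.coeff n) Eeuler)
      = 3 ^ n * ((n.factorial : ℚ) * (PowerSeries.coeff n) Eeuler) := by ring
    _ = 3 ^ n * (eulerE n : ℚ) := by rw [h]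

lemma Ek_congr {a b : ℚ} (h : a = b) : Ek a = Ek b := by rw [h]

lemma rescale3_uu : rescale (3:ℚ) uu = uu ^ 3 := by
  rw [uu_pow, uu, Ek, Ek, rescale_rescale]
  norm_num

lemma rescale3_vv : rescale (3:ℚ) vv = vv ^ 3 := by
  rw [vv_pow, vv, Ek, Ek, rescale_rescale]
  norm_num

lemma hE3c3 : E3 * (uu^3 + vv^3) = 2 := by
  have h := congrArg (rescale (3:ℚ)) hEcc
  rw [map_mul, map_add, rescale3_uu, rescale3_vv, map_ofNat] at h
  exact h

/-! ### derivative identities -/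

lemma D_ofNat (k : ℕ) [k.AtLeastTwo] : D (OfNat.ofNat k : ℚ⟦X⟧) = 0 := by
  rw [show (OfNat.ofNat k:ℚ⟦X⟧) = PowerSeries.C (R := ℚ) (OfNat.ofNat k) from (map_ofNat _ k).symm]
  simp

lemma D_one : D (1 : ℚ⟦X⟧) = 0 := by simp

lemma D_two : D (2 : ℚ⟦X⟧) = 0 := D_ofNat 2
lemma D_three : D (3 : ℚ⟦X⟧) = 0 := D_ofNat 3

lemma key (f c s A : ℚ⟦X⟧) (h0 : f * c = 2) (hDc : D c = A * s)
    (hDs : D s = A * c) (hDA : D A = 0) (hcs : c^2 = s^2 + 4) :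
    (D (D (D (D f))) - 4 * D (D f) + 3 * f) * c^5
      = A^4 * (2*c^4 - 160*c^2 + 768) - A^2 * (8*c^4 - 64*c^2) + 6*c^4 := by
  have H1 : (D f) * c + A * f * s = 0 := by
    have h := congrArg D h0
    simp only [Derivation.leibniz, smul_eq_mul, hDc, hDs, hDA, D_ofNat, D_two, D_three] at h
    linear_combination h
  have H2 : (D (D f)) * c + 2 * A * (D f) * s + A^2 * f * c = 0 := by
    have h := congrArg D H1
    simp only [map_add, map_mul, Derivation.leibniz, smul_eq_mul, hDc, hDs, hDA, map_zero,
      mul_zero, zero_mul, add_zero, zero_add, D_ofNat, D_two, D_three,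
      Derivation.leibniz_pow, smul_zero] at h
    linear_combination h
  have H3 : (D (D (D f))) * c + 3 * A * (D (D f)) * s + 3 * A^2 * (D f) * c + A^3 * f * s = 0 := by
    have h := congrArg D H2
    simp only [map_add, map_mul, Derivation.leibniz, smul_eq_mul, hDc, hDs, hDA, map_zero,
      mul_zero, zero_mul, add_zero, zero_add, D_ofNat, D_two, D_three,
      Derivation.leibniz_pow, smul_zero] at h
    linear_combination h
  have H4 : (D (D (D (D f)))) * c + 4 * A * (D (D (D f))) * s + 6 * A^2 * (D (D f)) * c
      + 4 * A^3 * (D f) * s + A^4 * f * c = 0 := by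
    have h := congrArg D H3
    simp only [map_add, map_mul, Derivation.leibniz, smul_eq_mul, hDc, hDs, hDA, map_zero,
      mul_zero, zero_mul, add_zero, zero_add, D_ofNat, D_two, D_three,
      Derivation.leibniz_pow, smul_zero] at h
    linear_combination h
  linear_combination (c^4) * H4 + (-4*A*s*c^3) * H3
    + (-4*c^4 - 6*A^2*c^4 + 12*A^2*s^2*c^2) * H2
    + (8*A*s*c^3 + 20*A^3*s*c^3 - 24*A^3*s^3*c) * H1
    + (96*A^4*f*c + 8*A^2*f*c^3 + 4*A^4*f*c^3 - 24*A^4*f*s^2*c) * hcs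
    + (384*A^4 + 32*A^2*c^2 - 80*A^4*c^2 + 3*c^4 - 4*A^2*c^4 + A^4*c^4) * h0

lemma hDcc : D (uu + vv) = (1:ℚ⟦X⟧) * (uu - vv) := by
  rw [map_add, hDu, hDv]; ring

lemma hDss : D (uu - vv) = (1:ℚ⟦X⟧) * (uu + vv) := by
  rw [map_sub, hDu, hDv]; ring

lemma hDc3 : D (uu^3 + vv^3) = (3:ℚ⟦X⟧) * (uu^3 - vv^3) := by
  rw [show uu^3 + vv^3 = uu*uu*uu + vv*vv*vv by ring]
  simp only [map_add, Derivation.leibniz, smul_eq_mul, hDu, hDv]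
  ring

lemma hDs3 : D (uu^3 - vv^3) = (3:ℚ⟦X⟧) * (uu^3 + vv^3) := by
  rw [show uu^3 - vv^3 = uu*uu*uu - vv*vv*vv by ring]
  simp only [map_sub, Derivation.leibniz, smul_eq_mul, hDu, hDv]
  ring

lemma hccss : (uu + vv)^2 = (uu - vv)^2 + 4 := by
  linear_combination 4 * huv

lemma hc3s3 : (uu^3 + vv^3)^2 = (uu^3 - vv^3)^2 + 4 := by
  linear_combination (4*(uu^2*vv^2 + uu*vv + 1)) * huv

lemma kE : (D (D (D (D Eeuler))) - 4 * D (D Eeuler) + 3 * Eeuler) * (uu+vv)^5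
    = (1:ℚ⟦X⟧)^4 * (2*(uu+vv)^4 - 160*(uu+vv)^2 + 768)
      - (1:ℚ⟦X⟧)^2 * (8*(uu+vv)^4 - 64*(uu+vv)^2) + 6*(uu+vv)^4 :=
  key Eeuler (uu+vv) (uu-vv) 1 hEcc hDcc hDss D_one hccss

lemma kE3 : (D (D (D (D E3))) - 4 * D (D E3) + 3 * E3) * (uu^3+vv^3)^5
    = (3:ℚ⟦X⟧)^4 * (2*(uu^3+vv^3)^4 - 160*(uu^3+vv^3)^2 + 768)
      - (3:ℚ⟦X⟧)^2 * (8*(uu^3+vv^3)^4 - 64*(uu^3+vv^3)^2) + 6*(uu^3+vv^3)^4 :=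
  key E3 (uu^3+vv^3) (uu^3-vv^3) 3 hE3c3 hDc3 hDs3 D_three hc3s3

/-! ### the explicit exponential polynomial -/

def Aexp : ℚ⟦X⟧ :=
  PowerSeries.C (R := ℚ) 352*(Ek 16 + Ek (-16)) + PowerSeries.C (R := ℚ) 352*(Ek 14 + Ek (-14))
  + PowerSeries.C (R := ℚ) 192*(Ek 12 + Ek (-12))
  + PowerSeries.C (R := ℚ) 2816*(Ek 10 + Ek (-10)) - PowerSeries.C (R := ℚ) 2656*(Ek 8 + Ek (-8))
  - PowerSeries.C (R := ℚ) 24000*(Ek 6 + Ek (-6))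
  - PowerSeries.C (R := ℚ) 19520*(Ek 4 + Ek (-4)) + PowerSeries.C (R := ℚ) 37216*(Ek 2 + Ek (-2))
  + PowerSeries.C (R := ℚ) 76032
  + PowerSeries.X * (PowerSeries.C (R := ℚ) 128*(Ek 16 - Ek (-16))
      - PowerSeries.C (R := ℚ) 128*(Ek 14 - Ek (-14))
      + PowerSeries.C (R := ℚ) 640*(Ek 10 - Ek (-10)) - PowerSeries.C (R := ℚ) 640*(Ek 8 - Ek (-8))
      + PowerSeries.C (R := ℚ) 1280*(Ek 4 - Ek (-4)) - PowerSeries.C (R := ℚ) 1280*(Ek 2 - Ek (-2)))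

def Tser : ℚ⟦X⟧ :=
  PowerSeries.C (R := ℚ) 3*(D (D (D (D E3))) - PowerSeries.C (R := ℚ) 4 * D (D E3) + PowerSeries.C (R := ℚ) 3 * E3)
  + (D (D (D (D Eeuler))) - PowerSeries.C (R := ℚ) 4 * D (D Eeuler) + PowerSeries.C (R := ℚ) 3 * Eeuler)
  + PowerSeries.C (R := ℚ) 352*(uu + vv) + PowerSeries.C (R := ℚ) 128*(PowerSeries.X * (uu - vv))

lemma Ek_eq_uu (k : ℕ) [k.AtLeastTwo] : Ek (OfNat.ofNat k) = uu ^ (k : ℕ) := by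
  rw [uu_pow]; exact Ek_congr (Nat.cast_ofNat).symm

lemma Ek_eq_vv (k : ℕ) [k.AtLeastTwo] : Ek (-(OfNat.ofNat k)) = vv ^ (k : ℕ) := by
  rw [vv_pow]; exact Ek_congr (congrArg Neg.neg (Nat.cast_ofNat).symm)

lemma hLamE : (D (D (D (D Eeuler))) - 4 * D (D Eeuler) + 3 * Eeuler) * (uu^3+vv^3)^5
    = (768 - 96*(uu+vv)^2) * ((uu+vv)^2 - 3)^5 := by
  set d4E := D (D (D (D Eeuler))) with hd4
  set d2E := D (D Eeuler) with hd2
  linear_combination (((uu+vv)^2 - 3)^5) * kE + ((-243)*(d4E - 4*d2E + 3*Eeuler)*vv^5 + (405)*(d4E - 4*d2E + 3*Eeuler)*vv^7 + (-270)*(d4E - 4*d2E + 3*Eeuler)*vv^9 + (90)*(d4E - 4*d2E + 3*Eeuler)*vv^11 + (-15)*(d4E - 4*d2E + 3*Eeuler)*vv^13 + (-1215)*(d4E - 4*d2E + 3*Eeuler)*uu*vv^4 + (2592)*(d4E - 4*d2E + 3*Eeuler)*uu*vv^6 + (-2025)*(d4E - 4*d2E + 3*Eeuler)*uu*vv^8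 + (720)*(d4E - 4*d2E + 3*Eeuler)*uu*vv^10 + (-105)*(d4E - 4*d2E + 3*Eeuler)*uu*vv^12 + (-2430)*(d4E - 4*d2E + 3*Eeuler)*uu^2*vv^3 + (7290)*(d4E - 4*d2E + 3*Eeuler)*uu^2*vv^5 + (-7128)*(d4E - 4*d2E + 3*Eeuler)*uu^2*vv^7 + (2925)*(d4E - 4*d2E + 3*Eeuler)*uu^2*vv^9 + (-450)*(d4E - 4*d2E + 3*Eeuler)*uu^2*vv^11 + (-2430)*(d4E - 4*d2E + 3*Eeuler)*uu^3*vv^2 + (11745)*(d4E - 4*d2E + 3*Eeuler)*uu^3*vv^4 + (-15390)*(d4E - 4*d2E + 3*Eeuler)*uu^3*vv^6 + (7722)*(d4E - 4*d2E + 3*Eeuler)*uu^3*vv^8 + (-1365)*(d4E - 4*d2E + 3*Eeuler)*uu^3*vv^10 + (-1215)*(d4E - 4*d2E + 3*Eeuler)*uu^4*vv + (11745)*(d4E - 4*d2E + 3*Eeuler)*uu^4*vv^3 + (-22275)*(d4E - 4*d2E + 3*Eeuler)*uu^4*vv^5 + (14310)*(d4E - 4*d2E + 3*Eeuler)*uu^4*vv^7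 + (-3003)*(d4E - 4*d2E + 3*Eeuler)*uu^4*vv^9 + (-243)*(d4E - 4*d2E + 3*Eeuler)*uu^5 + (7290)*(d4E - 4*d2E + 3*Eeuler)*uu^5*vv^2 + (-22275)*(d4E - 4*d2E + 3*Eeuler)*uu^5*vv^4 + (19305)*(d4E - 4*d2E + 3*Eeuler)*uu^5*vv^6 + (-4995)*(d4E - 4*d2E + 3*Eeuler)*uu^5*vv^8 + (2592)*(d4E - 4*d2E + 3*Eeuler)*uu^6*vv + (-15390)*(d4E - 4*d2E + 3*Eeuler)*uu^6*vv^3 + (19305)*(d4E - 4*d2E + 3*Eeuler)*uu^6*vv^5 + (-6435)*(d4E - 4*d2E + 3*Eeuler)*uu^6*vv^7 + (405)*(d4E - 4*d2E + 3*Eeuler)*uu^7 + (-7128)*(d4E - 4*d2E + 3*Eeuler)*uu^7*vv^2 + (14310)*(d4E - 4*d2E + 3*Eeuler)*uu^7*vv^4 + (-6435)*(d4E - 4*d2E + 3*Eeuler)*uu^7*vv^6 + (-2025)*(d4E - 4*d2E + 3*Eeuler)*uu^8*vv + (7722)*(d4E - 4*d2E + 3*Eeuler)*uu^8*vv^3 +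 (-4995)*(d4E - 4*d2E + 3*Eeuler)*uu^8*vv^5 + (-270)*(d4E - 4*d2E + 3*Eeuler)*uu^9 + (2925)*(d4E - 4*d2E + 3*Eeuler)*uu^9*vv^2 + (-3003)*(d4E - 4*d2E + 3*Eeuler)*uu^9*vv^4 + (720)*(d4E - 4*d2E + 3*Eeuler)*uu^10*vv + (-1365)*(d4E - 4*d2E + 3*Eeuler)*uu^10*vv^3 + (90)*(d4E - 4*d2E + 3*Eeuler)*uu^11 + (-450)*(d4E - 4*d2E + 3*Eeuler)*uu^11*vv^2 + (-105)*(d4E - 4*d2E + 3*Eeuler)*uu^12*vv + (-15)*(d4E - 4*d2E + 3*Eeuler)*uu^13) * huv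

lemma hA : Tser * (uu^3+vv^3)^5 = Aexp := by
  rw [Tser, Aexp]
  simp only [map_ofNat]
  rw [show Ek (16:ℚ) = uu^(16:ℕ) from Ek_eq_uu 16, show Ek (-16:ℚ) = vv^(16:ℕ) from Ek_eq_vv 16,
      show Ek (14:ℚ) = uu^(14:ℕ) from Ek_eq_uu 14, show Ek (-14:ℚ) = vv^(14:ℕ) from Ek_eq_vv 14,
      show Ek (12:ℚ) = uu^(12:ℕ) from Ek_eq_uu 12, show Ek (-12:ℚ) = vv^(12:ℕ) from Ek_eq_vv 12,
      show Ek (10:ℚ) = uu^(10:ℕ) from Ek_eq_uu 10, show Ek (-10:ℚ) = vv^(10:ℕ) from Ek_eq_vv 10,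
      show Ek (8:ℚ) = uu^(8:ℕ) from Ek_eq_uu 8, show Ek (-8:ℚ) = vv^(8:ℕ) from Ek_eq_vv 8,
      show Ek (6:ℚ) = uu^(6:ℕ) from Ek_eq_uu 6, show Ek (-6:ℚ) = vv^(6:ℕ) from Ek_eq_vv 6,
      show Ek (4:ℚ) = uu^(4:ℕ) from Ek_eq_uu 4, show Ek (-4:ℚ) = vv^(4:ℕ) from Ek_eq_vv 4,
      show Ek (2:ℚ) = uu^(2:ℕ) from Ek_eq_uu 2, show Ek (-2:ℚ) = vv^(2:ℕ) from Ek_eq_vv 2]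
  set d4E := D (D (D (D Eeuler))) with hd4
  set d2E := D (D Eeuler) with hd2
  set lamE3 := D (D (D (D E3))) - 4 * D (D E3) + 3 * E3 with hl3
  linear_combination (3:ℚ⟦X⟧) * kE3 + hLamE + ((76032) + (-297152)*vv^2 + (226720)*vv^4 + (-81888)*vv^6 + (17504)*vv^8 + (608)*vv^10 + (352)*vv^14 + (-592704)*uu*vv + (687808)*uu*vv^3 + (-343520)*uu*vv^5 + (79392)*uu*vv^7 + (-4576)*uu*vv^9 + (1760)*uu*vv^11 + (-297152)*uu^2 + (884736)*uu^2*vv^2 + (-737792)*uu^2*vv^4 + (220960)*uu^2*vv^6 + (-19968)*uu^2*vv^8 + (1760)*uu^2*vv^10 + (1760)*uu^2*vv^12 + (687808)*uu^3*vv + (-941760)*uu^3*vv^3 + (391168)*uu^3*vv^5 + (-44000)*uu^3*vv^7 + (1760)*uu^3*vv^11 + (226720)*uu^4 + (-737792)*uu^4*vv^2 + (469440)*uu^4*vv^4 + (-72512)*uu^4*vv^6 + (3520)*uu^4*vv^8 + (-343520)*uu^5*vv + (391168)*uu^5*vv^3 + (-86976)*uu^5*vv^5 + (3520)*uu^5*vv^7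 + (3520)*uu^5*vv^9 + (-81888)*uu^6 + (220960)*uu^6*vv^2 + (-72512)*uu^6*vv^4 + (3520)*uu^6*vv^8 + (79392)*uu^7*vv + (-44000)*uu^7*vv^3 + (3520)*uu^7*vv^5 + (17504)*uu^8 + (-19968)*uu^8*vv^2 + (3520)*uu^8*vv^4 + (3520)*uu^8*vv^6 + (-4576)*uu^9*vv + (3520)*uu^9*vv^5 + (608)*uu^10 + (1760)*uu^10*vv^2 + (1760)*uu^11*vv + (1760)*uu^11*vv^3 + (1760)*uu^12*vv^2 + (352)*uu^14 + (1280)*(X:ℚ⟦X⟧)*vv^2 + (-1280)*(X:ℚ⟦X⟧)*vv^4 + (640)*(X:ℚ⟦X⟧)*vv^8 + (-640)*(X:ℚ⟦X⟧)*vv^10 + (128)*(X:ℚ⟦X⟧)*vv^14 + (1280)*(X:ℚ⟦X⟧)*uu*vv^3 + (-1280)*(X:ℚ⟦X⟧)*uu*vv^5 + (640)*(X:ℚ⟦X⟧)*uu*vv^9 + (-640)*(X:ℚ⟦X⟧)*uu*vv^11 + (-1280)*(X:ℚ⟦X⟧)*uu^2 + (1280)*(X:ℚ⟦X⟧)*uu^2*vv^4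 + (-1280)*(X:ℚ⟦X⟧)*uu^2*vv^6 + (640)*(X:ℚ⟦X⟧)*uu^2*vv^10 + (-640)*(X:ℚ⟦X⟧)*uu^2*vv^12 + (-1280)*(X:ℚ⟦X⟧)*uu^3*vv + (1280)*(X:ℚ⟦X⟧)*uu^3*vv^5 + (-1280)*(X:ℚ⟦X⟧)*uu^3*vv^7 + (640)*(X:ℚ⟦X⟧)*uu^3*vv^11 + (1280)*(X:ℚ⟦X⟧)*uu^4 + (-1280)*(X:ℚ⟦X⟧)*uu^4*vv^2 + (1280)*(X:ℚ⟦X⟧)*uu^4*vv^6 + (-1280)*(X:ℚ⟦X⟧)*uu^4*vv^8 + (1280)*(X:ℚ⟦X⟧)*uu^5*vv + (-1280)*(X:ℚ⟦X⟧)*uu^5*vv^3 + (1280)*(X:ℚ⟦X⟧)*uu^5*vv^7 + (-1280)*(X:ℚ⟦X⟧)*uu^5*vv^9 + (1280)*(X:ℚ⟦X⟧)*uu^6*vv^2 + (-1280)*(X:ℚ⟦X⟧)*uu^6*vv^4 + (1280)*(X:ℚ⟦X⟧)*uu^6*vv^8 + (1280)*(X:ℚ⟦X⟧)*uu^7*vv^3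 + (-1280)*(X:ℚ⟦X⟧)*uu^7*vv^5 + (-640)*(X:ℚ⟦X⟧)*uu^8 + (1280)*(X:ℚ⟦X⟧)*uu^8*vv^4 + (-1280)*(X:ℚ⟦X⟧)*uu^8*vv^6 + (-640)*(X:ℚ⟦X⟧)*uu^9*vv + (1280)*(X:ℚ⟦X⟧)*uu^9*vv^5 + (640)*(X:ℚ⟦X⟧)*uu^10 + (-640)*(X:ℚ⟦X⟧)*uu^10*vv^2 + (640)*(X:ℚ⟦X⟧)*uu^11*vv + (-640)*(X:ℚ⟦X⟧)*uu^11*vv^3 + (640)*(X:ℚ⟦X⟧)*uu^12*vv^2 + (-128)*(X:ℚ⟦X⟧)*uu^14) * huv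

/-! ### integer values of Aexp -/

def aEv (m : ℕ) : ℤ :=
  352*(16^m + (-16:ℤ)^m) + 352*(14^m + (-14:ℤ)^m) + 192*(12^m + (-12:ℤ)^m)
  + 2816*(10^m + (-10:ℤ)^m) - 2656*(8^m + (-8:ℤ)^m) - 24000*(6^m + (-6:ℤ)^m)
  - 19520*(4^m + (-4:ℤ)^m) + 37216*(2^m + (-2:ℤ)^m)

def aOd (m : ℕ) : ℤ :=
  128*(16^m - (-16:ℤ)^m) - 128*(14^m - (-14:ℤ)^m) + 640*(10^m - (-10:ℤ)^m)
  - 640*(8^m - (-8:ℤ)^m) + 1280*(4^m - (-4:ℤ)^m) - 1280*(2^m - (-2:ℤ)^m)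

def aInt : ℕ → ℤ
  | 0 => 65536
  | (m+1) => aEv (m+1) + (m+1) * aOd m

lemma vE_uu (n : ℕ) : vE n uu = 1 := by rw [uu, vE_Ek]; norm_num

lemma vE_vv (n : ℕ) : vE n vv = (-1:ℚ)^n := by rw [vv, vE_Ek]

lemma vE_Aexp (m : ℕ) : vE m Aexp = (aInt m : ℚ) := by
  cases m with
  | zero =>
    rw [Aexp]
    simp only [vE_add, vE_sub, vE_Cmul, vE_Ek, vE_C, vE_X_mul]
    norm_num [aInt]
  | succ k =>
    rw [Aexp]
    simp only [vE_add, vE_sub, vE_Cmul, vE_Ek, vE_C, vE_X_mul, Nat.add_sub_cancel,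
      Nat.succ_ne_zero, if_false]
    rw [aInt, aEv, aOd]
    push_cast
    ring

lemma dvd_pow11 (r k : ℤ) (t : ℕ) (h : (65536:ℤ) ∣ r * k^11) :
    (65536:ℤ) ∣ r * k^(11+t) := by
  rw [pow_add, ← mul_assoc]
  exact h.mul_right _

lemma dvd_pow10 (r k : ℤ) (t : ℕ) (h : (65536:ℤ) ∣ r * k^10) :
    (65536:ℤ) ∣ r * k^(10+t) := by
  rw [pow_add, ← mul_assoc]
  exact h.mul_right _

lemma aEv_dvd (t : ℕ) : (65536:ℤ) ∣ aEv (11+t) := by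
  have h : aEv (11+t) = 352*16^(11+t) + 352*(-16:ℤ)^(11+t) + 352*14^(11+t) + 352*(-14:ℤ)^(11+t)
      + 192*12^(11+t) + 192*(-12:ℤ)^(11+t) + 2816*10^(11+t) + 2816*(-10:ℤ)^(11+t)
      + (-2656)*8^(11+t) + (-2656)*(-8:ℤ)^(11+t) + (-24000)*6^(11+t) + (-24000)*(-6:ℤ)^(11+t)
      + (-19520)*4^(11+t) + (-19520)*(-4:ℤ)^(11+t) + 37216*2^(11+t) + 37216*(-2:ℤ)^(11+t) := by
    rw [aEv]; ring
  rw [h]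
  repeat' apply dvd_add
  all_goals exact dvd_pow11 _ _ t (by norm_num)

lemma aOd_dvd (t : ℕ) : (65536:ℤ) ∣ aOd (10+t) := by
  have h : aOd (10+t) = 128*16^(10+t) + (-128)*(-16:ℤ)^(10+t) + (-128)*14^(10+t)
      + 128*(-14:ℤ)^(10+t) + 640*10^(10+t) + (-640)*(-10:ℤ)^(10+t)
      + (-640)*8^(10+t) + 640*(-8:ℤ)^(10+t) + 1280*4^(10+t) + (-1280)*(-4:ℤ)^(10+t)
      + (-1280)*2^(10+t) + 1280*(-2:ℤ)^(10+t) := by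
    rw [aOd]; ring
  rw [h]
  repeat' apply dvd_add
  all_goals exact dvd_pow10 _ _ t (by norm_num)

lemma aInt_dvd (m : ℕ) : (65536:ℤ) ∣ aInt m := by
  match m with
  | 0 => norm_num [aInt]
  | (k+1) =>
    by_cases hk : k ≤ 9
    · interval_cases k <;> norm_num [aInt, aEv, aOd]
    · have : ∃ t, k = 10 + t := ⟨k - 10, by omega⟩
      obtain ⟨t, rfl⟩ := this
      rw [aInt]
      have h1 : 10 + t + 1 = 11 + t := by ring
      rw [h1]
      exact dvd_add (aEv_dvd t) (Dvd.dvd.mul_left (aOd_dvd t) _)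

/-! ### integrality of E3 powers -/

lemma intval_mul {f g : ℚ⟦X⟧} (hf : ∀ n, ∃ z:ℤ, vE n f = (z:ℚ))
    (hg : ∀ n, ∃ z:ℤ, vE n g = (z:ℚ)) :
    ∀ n, ∃ z:ℤ, vE n (f*g) = (z:ℚ) := by
  intro n
  choose zf hzf using hf
  choose zg hzg using hg
  refine ⟨∑ k ∈ range (n+1), (n.choose k : ℤ) * (zf k * zg (n-k)), ?_⟩
  rw [vE_mul]
  rw [Int.cast_sum]
  refine Finset.sum_congr rfl fun k _ => ?_
  rw [hzf, hzg]
  push_cast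
  ring

lemma intval_E3 : ∀ n, ∃ z:ℤ, vE n E3 = (z:ℚ) := fun n => ⟨_, vE_E3 n⟩

lemma intval_E35 : ∀ n, ∃ z:ℤ, vE n (E3^5) = (z:ℚ) := by
  have h2 := intval_mul intval_E3 intval_E3
  have h3 := intval_mul intval_E3 h2
  have h4 := intval_mul intval_E3 h3
  have h5 := intval_mul intval_E3 h4
  have he : E3^5 = E3*(E3*(E3*(E3*E3))) := by ring
  rw [he]; exact h5

/-! ### the master congruence -/

lemma master32 : (32:ℚ⟦X⟧) * Tser = Aexp * E3^5 := by
  have h32 : (E3*(uu^3+vv^3))^5 = 32 := by rw [hE3c3]; norm_num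
  linear_combination (E3^5) * hA - Tser * h32

lemma vE_Tser (b : ℕ) (hb : Even b) :
    vE b Tser = ((3*(3^(b+4)*eulerE (b+4)) - 12*(3^(b+2)*eulerE (b+2)) + 9*(3^b*eulerE b)
      + eulerE (b+4) - 4*eulerE (b+2) + 3*eulerE b + 704 + 256*b : ℤ) : ℚ) := by
  rw [Tser]
  simp only [vE_add, vE_sub, vE_Cmul, vE_D, vE_E3, vE_Eeuler, vE_X_mul, vE_uu, vE_vv]
  rw [show b+1+1+1+1 = b+4 from by omega, show b+1+1 = b+2 from by omega]
  rcases Nat.eq_zero_or_pos b with rfl | hpos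
  · push_cast
    norm_num
    ring
  · have h1 : (-1:ℚ)^b = 1 := hb.neg_one_pow
    have h2 : (-1:ℚ)^(b-1) = -1 := by
      have ho : Odd (b-1) := Nat.Even.sub_odd hpos hb odd_one
      exact ho.neg_one_pow
    rw [h1, h2]
    push_cast
    ring

lemma main_dvd (b : ℕ) (hb : Even b) :
    (2048:ℤ) ∣ (3*(3^(b+4)*eulerE (b+4)) - 12*(3^(b+2)*eulerE (b+2)) + 9*(3^b*eulerE b)
      + eulerE (b+4) - 4*eulerE (b+2) + 3*eulerE b + 704 + 256*b) := by
  choose z5 hz5 using intval_E35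
  have hv := congrArg (vE b) master32
  rw [vE_nmul, vE_Tser b hb, vE_mul] at hv
  have hsum : ∑ k ∈ range (b+1), (b.choose k:ℚ) * (vE k Aexp * vE (b-k) (E3^5))
      = ((∑ k ∈ range (b+1), (b.choose k:ℤ) * (aInt k * z5 (b-k)) : ℤ) : ℚ) := by
    rw [Int.cast_sum]
    refine Finset.sum_congr rfl fun k _ => ?_
    rw [vE_Aexp, hz5]
    push_cast
    ring
  rw [hsum] at hv
  have hv' : (32 * (3*(3^(b+4)*eulerE (b+4)) - 12*(3^(b+2)*eulerE (b+2)) + 9*(3^b*eulerE b)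
      + eulerE (b+4) - 4*eulerE (b+2) + 3*eulerE b + 704 + 256*b) : ℤ)
      = ∑ k ∈ range (b+1), (b.choose k:ℤ) * (aInt k * z5 (b-k)) := by
    exact_mod_cast hv
  have hdvd : (65536:ℤ) ∣ ∑ k ∈ range (b+1), (b.choose k:ℤ) * (aInt k * z5 (b-k)) :=
    Finset.dvd_sum fun k _ => Dvd.dvd.mul_left ((aInt_dvd k).mul_right _) _
  obtain ⟨w, hw⟩ := hdvd
  rw [hw] at hv'
  refine ⟨w, ?_⟩
  linarith

lemma div4 (c : ℕ) : (4:ℤ) ∣ 3 * 9^c + 1 := by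
  induction c with
  | zero => norm_num
  | succ k ih =>
    have h : 3*(9:ℤ)^(k+1)+1 = 9*(3*9^k+1) - 8 := by ring
    rw [h]
    exact dvd_sub (ih.mul_left 9) (by norm_num)

lemma div4' (m : ℕ) (hm : Even m) : (4:ℤ) ∣ 3^(m+1) + 1 := by
  obtain ⟨c, rfl⟩ := hm
  have h : (3:ℤ)^(c+c+1) = 3 * 9^c := by
    rw [show c+c+1 = 2*c+1 by ring, pow_succ, pow_mul]
    norm_num
    ring
  rw [h]
  exact div4 c

end

end EulerModAux

theorem scaled_eulerE_second_difference_mod_512 (b : ℕ) (hb : Even b) :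
    3 * ((3 ^ (b + 1) + 1 : ℤ) / 4) * eulerE b
      - 4 * ((3 ^ (b + 3) + 1 : ℤ) / 4) * eulerE (b + 2)
      + ((3 ^ (b + 5) + 1 : ℤ) / 4) * eulerE (b + 4) ≡
        -176 - 64 * (b : ℤ) [ZMOD 2 ^ 9] := by
  have hb2 : Even (b + 2) := by rcases hb with ⟨c, rfl⟩; exact ⟨c+1, by ring⟩
  have hb4 : Even (b + 4) := by rcases hb with ⟨c, rfl⟩; exact ⟨c+2, by ring⟩
  have hq1 : ((3:ℤ)^(b+1)+1)/4*4 = 3^(b+1)+1 := Int.ediv_mul_cancel (EulerModAux.div4' b hb)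
  have hq2 : ((3:ℤ)^(b+3)+1)/4*4 = 3^(b+3)+1 := by
    have h := Int.ediv_mul_cancel (EulerModAux.div4' (b+2) hb2)
    rw [show b+2+1 = b+3 from by omega] at h
    exact h
  have hq3 : ((3:ℤ)^(b+5)+1)/4*4 = 3^(b+5)+1 := by
    have h := Int.ediv_mul_cancel (EulerModAux.div4' (b+4) hb4)
    rw [show b+4+1 = b+5 from by omega] at h
    exact h
  have hmain := EulerModAux.main_dvd b hb
  obtain ⟨w, hw⟩ := hmain
  have hTb4 : 4*(3 * ((3 ^ (b + 1) + 1 : ℤ) / 4) * eulerE b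
      - 4 * ((3 ^ (b + 3) + 1 : ℤ) / 4) * eulerE (b + 2)
      + ((3 ^ (b + 5) + 1 : ℤ) / 4) * eulerE (b + 4) + 176 + 64*b)
      = 3*(3^(b+4)*eulerE (b+4)) - 12*(3^(b+2)*eulerE (b+2)) + 9*(3^b*eulerE b)
      + eulerE (b+4) - 4*eulerE (b+2) + 3*eulerE b + 704 + 256*b := by
    linear_combination (3*eulerE b)*hq1 + (-4*eulerE (b+2))*hq2 + (eulerE (b+4))*hq3
  rw [hw] at hTb4
  have hP : (3 * ((3 ^ (b + 1) + 1 : ℤ) / 4) * eulerE b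
      - 4 * ((3 ^ (b + 3) + 1 : ℤ) / 4) * eulerE (b + 2)
      + ((3 ^ (b + 5) + 1 : ℤ) / 4) * eulerE (b + 4) + 176 + 64*b) = 512*w :=
    mul_left_cancel₀ (by norm_num : (4:ℤ) ≠ 0)
      (hTb4.trans (by ring : (2048*w:ℤ) = 4*(512*w)))
  refine Int.ModEq.symm (Int.modEq_iff_dvd.mpr ⟨w, ?_⟩)
  have h512 : ((2:ℤ)^9) = 512 := by norm_num
  rw [h512]
  linear_combination hP
end

section
/- Let k and m be positive integers with m ≥ 4. Then 3^{2^m k} ≡ 1 + 61·2^{m+2} k + 2^{2m+3} k^2 (mod 2^{m+9}). -/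
private lemma aux_base (n : ℕ) :
    (3 : ℤ) ^ (2 ^ (n + 4)) ≡
      1 + 3904 * 2 ^ n + 2048 * 2 ^ n * 2 ^ n [ZMOD 8192 * 2 ^ n] := by
  induction n with
  | zero => decide
  | succ n ih =>
    obtain ⟨t, ht⟩ := Int.modEq_iff_dvd.mp ih
    have h3 : (3 : ℤ) ^ (2 ^ (n + 4)) =
        (1 + 3904 * 2 ^ n + 2048 * 2 ^ n * 2 ^ n) - 8192 * 2 ^ n * t := by linarith
    have hpow : (3 : ℤ) ^ (2 ^ (n + 1 + 4)) = ((3 : ℤ) ^ (2 ^ (n + 4))) ^ 2 := by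
      rw [← pow_mul]
      congr 1
    rw [Int.modEq_iff_dvd]
    set Q : ℤ := 2 ^ n with hQ
    refine ⟨-930 * Q - 976 * Q ^ 2 - 256 * Q ^ 3 + t * (1 + 3904 * Q + 2048 * Q ^ 2)
      - 4096 * Q * t ^ 2, ?_⟩
    rw [hpow, h3]
    push_cast [pow_succ]
    ring

private lemma aux_main (n kk : ℕ) :
    (3 : ℤ) ^ (2 ^ (n + 4) * kk) ≡
      1 + 3904 * 2 ^ n * kk + 2048 * 2 ^ n * 2 ^ n * (kk : ℤ) ^ 2 [ZMOD 8192 * 2 ^ n] := by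
  induction kk with
  | zero => simp [Int.ModEq.refl]
  | succ kk ih =>
    have hpow : (3 : ℤ) ^ (2 ^ (n + 4) * (kk + 1)) =
        (3 : ℤ) ^ (2 ^ (n + 4) * kk) * (3 : ℤ) ^ (2 ^ (n + 4)) := by
      rw [← pow_add]
      ring_nf
    rw [hpow]
    have h1 := Int.ModEq.mul ih (aux_base n)
    refine h1.trans ?_
    rw [Int.modEq_iff_dvd]
    set Q : ℤ := 2 ^ n with hQ
    refine ⟨-(1860 * Q * kk + 976 * Q ^ 2 * (kk + (kk:ℤ) ^ 2) + 512 * Q ^ 3 * (kk:ℤ) ^ 2), ?_⟩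
    push_cast
    ring

theorem three_pow_two_pow_mul_mod (k m : ℕ) (hk : 0 < k) (hm : 4 ≤ m) :
    (3 : ℤ) ^ (2 ^ m * k) ≡
      1 + 61 * 2 ^ (m + 2) * k + 2 ^ (2 * m + 3) * (k : ℤ) ^ 2 [ZMOD 2 ^ (m + 9)] := by
  obtain ⟨n, rfl⟩ := Nat.exists_eq_add_of_le hm
  rw [Nat.add_comm 4 n]
  have e1 : ((2 : ℤ) ^ (n + 4 + 9)) = 8192 * 2 ^ n := by ring
  have e2 : (1 : ℤ) + 61 * 2 ^ (n + 4 + 2) * k + 2 ^ (2 * (n + 4) + 3) * (k : ℤ) ^ 2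
      = 1 + 3904 * 2 ^ n * k + 2048 * 2 ^ n * 2 ^ n * (k : ℤ) ^ 2 := by ring
  rw [e1, e2]
  exact aux_main n k
end

section
/- Let b be a nonnegative even integer. Then E_b ≡ 3b^2 - 11b + 1 (mod 2^{7}) if 4 | b, and E_b ≡ b^2 - 23b + 41 (mod 2^{7}) if 4 | (b - 2). -/
def Qe (r : ℕ) : ℤ := if Even r then 12*(r:ℤ)^2-22*r+1 else 4*(r:ℤ)^2-46*r+41

lemma even_side (a : ℕ → ℤ) (N : ℕ) :
    ∑ r ∈ Finset.range (N+2), (((N+1).choose (2*r) : ℤ)) * a r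
      = ∑ s ∈ Finset.range (N+1), (N.choose (2*s+1) : ℤ) * a (s+1)
        + ∑ r ∈ Finset.range (N+1), (N.choose (2*r) : ℤ) * a r := by
  rw [Finset.sum_range_succ' (fun r => (((N+1).choose (2*r) : ℤ)) * a r) (N+1)]
  have h2 : ∑ s ∈ Finset.range (N+1), (((N+1).choose (2*(s+1)) : ℤ)) * a (s+1)
      = ∑ s ∈ Finset.range (N+1), ((N.choose (2*s+1) : ℤ) * a (s+1)
          + (N.choose (2*(s+1)) : ℤ) * a (s+1)) := by
    refine Finset.sum_congr rfl fun s _ => ?_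
    rw [show 2*(s+1) = (2*s+1)+1 by ring, Nat.choose_succ_succ',
      show (2*s+1)+1 = 2*(s+1) by ring]
    push_cast
    ring
  have h4 := Finset.sum_range_succ' (fun r => (N.choose (2*r) : ℤ) * a r) (N+1)
  rw [Finset.sum_range_succ (fun r => (N.choose (2*r) : ℤ) * a r) (N+1),
    show (N.choose (2*(N+1)) : ℤ) = 0 by norm_cast; exact Nat.choose_eq_zero_of_lt (by omega)]
    at h4
  simp only [zero_mul, add_zero] at h4
  simp only [h2, Finset.sum_add_distrib]
  simp only [Nat.choose_zero_right, Nat.cast_one, one_mul, mul_zero, Nat.mul_zero] at h4 ⊢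
  linarith [h4]

lemma odd_side (a : ℕ → ℤ) (N : ℕ) :
    ∑ r ∈ Finset.range (N+2), (((N+1).choose (2*r+1) : ℤ)) * a r
      = ∑ r ∈ Finset.range (N+1), (N.choose (2*r) : ℤ) * a r
        + ∑ r ∈ Finset.range (N+1), (N.choose (2*r+1) : ℤ) * a r := by
  have h2 : ∀ r : ℕ, (((N+1).choose (2*r+1) : ℤ)) * a r
      = (N.choose (2*r) : ℤ) * a r + (N.choose (2*r+1) : ℤ) * a r := by
    intro r
    rw [Nat.choose_succ_succ']
    push_cast; ring
  rw [Finset.sum_range_succ (fun r => (((N+1).choose (2*r+1) : ℤ)) * a r) (N+1),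
    show (((N+1).choose (2*(N+1)+1) : ℤ)) = 0 by
      norm_cast; exact Nat.choose_eq_zero_of_lt (by omega)]
  simp only [zero_mul, add_zero]
  rw [Finset.sum_congr rfl (fun r _ => h2 r), Finset.sum_add_distrib]

def ue0 (N : ℕ) : ℤ := ∑ r ∈ Finset.range (N+1), (N.choose (2*r) : ℤ) * 1
def ue1 (N : ℕ) : ℤ := ∑ r ∈ Finset.range (N+1), (N.choose (2*r) : ℤ) * (2*(r:ℤ))
def ue2 (N : ℕ) : ℤ := ∑ r ∈ Finset.range (N+1), (N.choose (2*r) : ℤ) * (2*(r:ℤ))^2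
def oe0 (N : ℕ) : ℤ := ∑ r ∈ Finset.range (N+1), (N.choose (2*r+1) : ℤ) * 1
def oe1 (N : ℕ) : ℤ := ∑ r ∈ Finset.range (N+1), (N.choose (2*r+1) : ℤ) * (2*(r:ℤ)+1)
def oe2 (N : ℕ) : ℤ := ∑ r ∈ Finset.range (N+1), (N.choose (2*r+1) : ℤ) * (2*(r:ℤ)+1)^2
def ve0 (N : ℕ) : ℤ := ∑ r ∈ Finset.range (N+1), (N.choose (2*r) : ℤ) * ((-1:ℤ)^r * 1)
def ve1 (N : ℕ) : ℤ := ∑ r ∈ Finset.range (N+1), (N.choose (2*r) : ℤ) * ((-1:ℤ)^r * (2*(r:ℤ)))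
def ve2 (N : ℕ) : ℤ := ∑ r ∈ Finset.range (N+1), (N.choose (2*r) : ℤ) * ((-1:ℤ)^r * (2*(r:ℤ))^2)
def we0 (N : ℕ) : ℤ := ∑ r ∈ Finset.range (N+1), (N.choose (2*r+1) : ℤ) * ((-1:ℤ)^r * 1)
def we1 (N : ℕ) : ℤ := ∑ r ∈ Finset.range (N+1), (N.choose (2*r+1) : ℤ) * ((-1:ℤ)^r * (2*(r:ℤ)+1))
def we2 (N : ℕ) : ℤ := ∑ r ∈ Finset.range (N+1), (N.choose (2*r+1) : ℤ) * ((-1:ℤ)^r * (2*(r:ℤ)+1)^2)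

lemma ue0_step (N : ℕ) : ue0 (N+1) = oe0 N + ue0 N := by
  have h := even_side (fun _ => (1:ℤ)) N
  rw [ue0, show N+1+1 = N+2 from rfl, h, ue0, oe0]

lemma ue1_step (N : ℕ) : ue1 (N+1) = (oe1 N + oe0 N) + ue1 N := by
  have h := even_side (fun r => (2*(r:ℤ))) N
  rw [ue1, show N+1+1 = N+2 from rfl, h, ue1, oe1, oe0]
  congr 1
  rw [← Finset.sum_add_distrib]
  refine Finset.sum_congr rfl fun s _ => ?_
  push_cast; ring

lemma ue2_step (N : ℕ) : ue2 (N+1) = (oe2 N + 2*oe1 N + oe0 N) + ue2 N := by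
  have h := even_side (fun r => (2*(r:ℤ))^2) N
  rw [ue2, show N+1+1 = N+2 from rfl, h, ue2, oe2, oe1, oe0]
  congr 1
  rw [Finset.mul_sum, ← Finset.sum_add_distrib, ← Finset.sum_add_distrib]
  refine Finset.sum_congr rfl fun s _ => ?_
  push_cast; ring

lemma oe0_step (N : ℕ) : oe0 (N+1) = ue0 N + oe0 N := by
  have h := odd_side (fun _ => (1:ℤ)) N
  rw [oe0, show N+1+1 = N+2 from rfl, h, ue0, oe0]

lemma oe1_step (N : ℕ) : oe1 (N+1) = (ue1 N + ue0 N) + oe1 N := by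
  have h := odd_side (fun r => (2*(r:ℤ)+1)) N
  rw [oe1, show N+1+1 = N+2 from rfl, h, ue1, ue0, oe1]
  congr 1
  rw [← Finset.sum_add_distrib]
  refine Finset.sum_congr rfl fun s _ => ?_
  push_cast; ring

lemma oe2_step (N : ℕ) : oe2 (N+1) = (ue2 N + 2*ue1 N + ue0 N) + oe2 N := by
  have h := odd_side (fun r => (2*(r:ℤ)+1)^2) N
  rw [oe2, show N+1+1 = N+2 from rfl, h, ue2, ue1, ue0, oe2]
  congr 1
  rw [Finset.mul_sum, ← Finset.sum_add_distrib, ← Finset.sum_add_distrib]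
  refine Finset.sum_congr rfl fun s _ => ?_
  push_cast; ring

lemma ve0_step (N : ℕ) : ve0 (N+1) = -(we0 N) + ve0 N := by
  have h := even_side (fun r => ((-1:ℤ)^r * 1)) N
  rw [ve0, show N+1+1 = N+2 from rfl, h, ve0, we0]
  congr 1
  rw [← Finset.sum_neg_distrib]
  refine Finset.sum_congr rfl fun s _ => ?_
  rw [pow_succ]; ring

lemma ve1_step (N : ℕ) : ve1 (N+1) = -(we1 N + we0 N) + ve1 N := by
  have h := even_side (fun r => ((-1:ℤ)^r * (2*(r:ℤ)))) N
  rw [ve1, show N+1+1 = N+2 from rfl, h, ve1, we1, we0]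
  congr 1
  have h1 : ∑ s ∈ Finset.range (N+1), (N.choose (2*s+1) : ℤ) * ((-1:ℤ)^(s+1) * (2*(((s+1:ℕ)):ℤ)))
      = -∑ s ∈ Finset.range (N+1), ((N.choose (2*s+1) : ℤ) * ((-1:ℤ)^s * (2*(s:ℤ)+1))
          + (N.choose (2*s+1) : ℤ) * ((-1:ℤ)^s * 1)) := by
    rw [← Finset.sum_neg_distrib]
    refine Finset.sum_congr rfl fun s _ => ?_
    push_cast [pow_succ]; ring
  rw [h1, Finset.sum_add_distrib]

lemma ve2_step (N : ℕ) : ve2 (N+1) = -(we2 N + 2*we1 N + we0 N) + ve2 N := by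
  have h := even_side (fun r => ((-1:ℤ)^r * (2*(r:ℤ))^2)) N
  rw [ve2, show N+1+1 = N+2 from rfl, h, ve2, we2, we1, we0]
  congr 1
  have h1 : ∑ s ∈ Finset.range (N+1), (N.choose (2*s+1) : ℤ) * ((-1:ℤ)^(s+1) * (2*(((s+1:ℕ)):ℤ))^2)
      = -∑ s ∈ Finset.range (N+1), ((N.choose (2*s+1) : ℤ) * ((-1:ℤ)^s * (2*(s:ℤ)+1)^2)
          + 2 * ((N.choose (2*s+1) : ℤ) * ((-1:ℤ)^s * (2*(s:ℤ)+1)))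
          + (N.choose (2*s+1) : ℤ) * ((-1:ℤ)^s * 1)) := by
    rw [← Finset.sum_neg_distrib]
    refine Finset.sum_congr rfl fun s _ => ?_
    push_cast [pow_succ]; ring
  rw [h1, Finset.sum_add_distrib, Finset.sum_add_distrib, ← Finset.mul_sum]

lemma we0_step (N : ℕ) : we0 (N+1) = ve0 N + we0 N := by
  have h := odd_side (fun r => ((-1:ℤ)^r * 1)) N
  rw [we0, show N+1+1 = N+2 from rfl, h, ve0, we0]

lemma we1_step (N : ℕ) : we1 (N+1) = (ve1 N + ve0 N) + we1 N := by
  have h := odd_side (fun r => ((-1:ℤ)^r * (2*(r:ℤ)+1))) N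
  rw [we1, show N+1+1 = N+2 from rfl, h, ve1, ve0, we1]
  congr 1
  rw [← Finset.sum_add_distrib]
  refine Finset.sum_congr rfl fun s _ => ?_
  push_cast; ring

lemma we2_step (N : ℕ) : we2 (N+1) = (ve2 N + 2*ve1 N + ve0 N) + we2 N := by
  have h := odd_side (fun r => ((-1:ℤ)^r * (2*(r:ℤ)+1)^2)) N
  rw [we2, show N+1+1 = N+2 from rfl, h, ve2, ve1, ve0, we2]
  congr 1
  rw [Finset.mul_sum, ← Finset.sum_add_distrib, ← Finset.sum_add_distrib]
  refine Finset.sum_congr rfl fun s _ => ?_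
  push_cast; ring

lemma ueoe0_closed : ∀ N : ℕ, ue0 (N+1) = 2^N ∧ oe0 (N+1) = 2^N := by
  intro N
  induction N with
  | zero => exact ⟨by decide, by decide⟩
  | succ n ih =>
    constructor
    · rw [ue0_step, ih.1, ih.2]; ring
    · rw [oe0_step, ih.1, ih.2]; ring

lemma uo_div : ∀ N : ℕ, (2:ℤ)^N ∣ ue1 (N+2) ∧ (2:ℤ)^N ∣ oe1 (N+2)
    ∧ (2:ℤ)^(N+1) ∣ (ue1 (N+2) + oe1 (N+2))
    ∧ (2:ℤ)^N ∣ ue2 (N+2) ∧ (2:ℤ)^N ∣ oe2 (N+2)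
    ∧ (2:ℤ)^(N+1) ∣ (ue2 (N+2) + oe2 (N+2)) := by
  intro N
  induction N with
  | zero =>
    refine ⟨one_dvd _, one_dvd _, ?_, one_dvd _, one_dvd _, ?_⟩
    · show (2:ℤ)^1 ∣ _; decide
    · show (2:ℤ)^1 ∣ _; decide
  | succ n ih =>
    obtain ⟨hu1, ho1, hs1, hu2, ho2, hs2⟩ := ih
    have hu0 : ue0 (n+2) = 2^(n+1) := (ueoe0_closed (n+1)).1
    have ho0 : oe0 (n+2) = 2^(n+1) := (ueoe0_closed (n+1)).2
    have e1 : ue1 (n+3) = (ue1 (n+2) + oe1 (n+2)) + 2^(n+1) := by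
      rw [show n+3 = (n+2)+1 from rfl, ue1_step, ho0]; ring
    have e2 : oe1 (n+3) = (ue1 (n+2) + oe1 (n+2)) + 2^(n+1) := by
      rw [show n+3 = (n+2)+1 from rfl, oe1_step, hu0]; ring
    have e3 : ue2 (n+3) = (ue2 (n+2) + oe2 (n+2)) + 2*oe1 (n+2) + 2^(n+1) := by
      rw [show n+3 = (n+2)+1 from rfl, ue2_step, ho0]; ring
    have e4 : oe2 (n+3) = (ue2 (n+2) + oe2 (n+2)) + 2*ue1 (n+2) + 2^(n+1) := by
      rw [show n+3 = (n+2)+1 from rfl, oe2_step, hu0]; ring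
    have p1 : (2:ℤ)^(n+1) ∣ ue1 (n+3) := by
      rw [e1]; exact dvd_add hs1 dvd_rfl
    have p2 : (2:ℤ)^(n+1) ∣ oe1 (n+3) := by
      rw [e2]; exact dvd_add hs1 dvd_rfl
    have p4 : (2:ℤ)^(n+1) ∣ ue2 (n+3) := by
      rw [e3]
      exact dvd_add (dvd_add hs2 (by rw [pow_succ, mul_comm]; exact mul_dvd_mul_left 2 ho1)) dvd_rfl
    have p5 : (2:ℤ)^(n+1) ∣ oe2 (n+3) := by
      rw [e4]
      exact dvd_add (dvd_add hs2 (by rw [pow_succ, mul_comm]; exact mul_dvd_mul_left 2 hu1)) dvd_rfl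
    refine ⟨p1, p2, ?_, p4, p5, ?_⟩
    · have h : ue1 (n+3) + oe1 (n+3) = 2*(ue1 (n+2) + oe1 (n+2)) + 2^(n+2) := by
        rw [e1, e2]; ring
      rw [h, pow_succ (2:ℤ) (n+1), mul_comm]
      exact dvd_add (mul_dvd_mul_left 2 hs1) (by rw [pow_succ, mul_comm])
    · have h : ue2 (n+3) + oe2 (n+3) = 2*(ue2 (n+2) + oe2 (n+2)) + 2*(ue1 (n+2) + oe1 (n+2)) + 2^(n+2) := by
        rw [e3, e4]; ring
      rw [h, pow_succ (2:ℤ) (n+1), mul_comm]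
      exact dvd_add (dvd_add (mul_dvd_mul_left 2 hs2) (mul_dvd_mul_left 2 hs1))
        (by rw [pow_succ, mul_comm])

lemma v0_two (N : ℕ) : ve0 (N+2) = -2 * we0 N ∧ we0 (N+2) = 2 * ve0 N
    ∧ ve1 (N+2) = -2*(we1 N + we0 N + ve0 N) ∧ we1 (N+2) = 2*(ve1 N + ve0 N - we0 N)
    ∧ ve2 (N+2) = -2*(we2 N + 2*we1 N + we0 N + 2*ve1 N + 2*ve0 N)
    ∧ we2 (N+2) = 2*(ve2 N + 2*ve1 N + ve0 N - 2*we1 N - 2*we0 N) := by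
  refine ⟨?_, ?_, ?_, ?_, ?_, ?_⟩ <;>
    simp only [show N+2 = (N+1)+1 from rfl, ve0_step, ve1_step, ve2_step,
      we0_step, we1_step, we2_step] <;> ring

lemma vw_div : ∀ N : ℕ, (2:ℤ)^(N/2) ∣ ve0 N ∧ (2:ℤ)^(N/2) ∣ we0 N
    ∧ (2:ℤ)^(N/2) ∣ ve1 N ∧ (2:ℤ)^(N/2) ∣ we1 N
    ∧ (2:ℤ)^(N/2) ∣ ve2 N ∧ (2:ℤ)^(N/2) ∣ we2 N := by
  have key : ∀ N : ℕ, ((2:ℤ)^(N/2) ∣ ve0 N ∧ (2:ℤ)^(N/2) ∣ we0 N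
      ∧ (2:ℤ)^(N/2) ∣ ve1 N ∧ (2:ℤ)^(N/2) ∣ we1 N
      ∧ (2:ℤ)^(N/2) ∣ ve2 N ∧ (2:ℤ)^(N/2) ∣ we2 N) ∧
      ((2:ℤ)^((N+1)/2) ∣ ve0 (N+1) ∧ (2:ℤ)^((N+1)/2) ∣ we0 (N+1)
      ∧ (2:ℤ)^((N+1)/2) ∣ ve1 (N+1) ∧ (2:ℤ)^((N+1)/2) ∣ we1 (N+1)
      ∧ (2:ℤ)^((N+1)/2) ∣ ve2 (N+1) ∧ (2:ℤ)^((N+1)/2) ∣ we2 (N+1)) := by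
    intro N
    induction N with
    | zero =>
      constructor
      · exact ⟨one_dvd _, one_dvd _, one_dvd _, one_dvd _, one_dvd _, one_dvd _⟩
      · exact ⟨one_dvd _, one_dvd _, one_dvd _, one_dvd _, one_dvd _, one_dvd _⟩
    | succ n ih =>
      obtain ⟨⟨a0, b0, a1, b1, a2, b2⟩, ihs⟩ := ih
      refine ⟨ihs, ?_⟩
      obtain ⟨t1, t2, t3, t4, t5, t6⟩ := v0_two n
      have hp : ((n+1+1)/2 : ℕ) = n/2 + 1 := by omega
      rw [hp, pow_succ]
      refine ⟨?_, ?_, ?_, ?_, ?_, ?_⟩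
      · rw [t1, mul_comm ((2:ℤ)^(n/2)) 2]
        exact mul_dvd_mul (by decide) b0
      · rw [t2, mul_comm ((2:ℤ)^(n/2)) 2]
        exact mul_dvd_mul dvd_rfl a0
      · rw [t3, mul_comm ((2:ℤ)^(n/2)) 2]
        exact mul_dvd_mul (by decide) (dvd_add (dvd_add b1 b0) a0)
      · rw [t4, mul_comm ((2:ℤ)^(n/2)) 2]
        exact mul_dvd_mul dvd_rfl (dvd_sub (dvd_add a1 a0) b0)
      · rw [t5, mul_comm ((2:ℤ)^(n/2)) 2]
        exact mul_dvd_mul (by decide) (dvd_add (dvd_add (dvd_add (dvd_add b2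
          (Dvd.dvd.mul_left b1 2)) b0) (Dvd.dvd.mul_left a1 2)) (Dvd.dvd.mul_left a0 2))
      · rw [t6, mul_comm ((2:ℤ)^(n/2)) 2]
        exact mul_dvd_mul dvd_rfl (dvd_sub (dvd_sub (dvd_add (dvd_add a2
          (Dvd.dvd.mul_left a1 2)) a0) (Dvd.dvd.mul_left b1 2)) (Dvd.dvd.mul_left b0 2))
  exact fun N => (key N).1

lemma S_eq (n : ℕ) :
    ∑ r ∈ Finset.range (2*n+1), ((2*n).choose (2*r) : ℤ) * Qe r
      = 2*ue2 (2*n) - 17*ue1 (2*n) + 21*ue0 (2*n) + ve2 (2*n) + 6*ve1 (2*n) - 20*ve0 (2*n) := by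
  rw [ue2, ue1, ue0, ve2, ve1, ve0, Finset.mul_sum, Finset.mul_sum, Finset.mul_sum,
    Finset.mul_sum, Finset.mul_sum,
    ← Finset.sum_sub_distrib, ← Finset.sum_add_distrib, ← Finset.sum_add_distrib,
    ← Finset.sum_add_distrib, ← Finset.sum_sub_distrib]
  refine Finset.sum_congr rfl fun r _ => ?_
  rcases Nat.even_or_odd r with hr | hr
  · rw [Qe, if_pos hr, hr.neg_one_pow]; ring
  · rw [Qe, if_neg (Nat.not_even_iff_odd.mpr hr), hr.neg_one_pow]; ring

lemma S_small (n : ℕ) :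
    ∑ r ∈ Finset.range (n+1), ((2*n).choose (2*r) : ℤ) * Qe r
      = ∑ r ∈ Finset.range (2*n+1), ((2*n).choose (2*r) : ℤ) * Qe r := by
  refine (Finset.sum_subset ?_ ?_).symm |>.symm
  · intro x hx; simp only [Finset.mem_range] at hx ⊢; omega
  · intro x _ hx
    simp only [Finset.mem_range, not_lt] at hx
    rw [Nat.choose_eq_zero_of_lt (by omega)]
    simp

lemma keyDvd (n : ℕ) (hn : 1 ≤ n) :
    (128:ℤ) ∣ ∑ r ∈ Finset.range (n+1), ((2*n).choose (2*r) : ℤ) * Qe r := by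
  by_cases h6 : n ≤ 6
  · interval_cases n <;> decide
  · rw [S_small, S_eq]
    obtain ⟨k, rfl⟩ : ∃ k, n = k + 7 := ⟨n - 7, by omega⟩
    have h2n : 2*(k+7) = (2*k+12)+2 := by ring
    have hu0 : ue0 (2*(k+7)) = 2^(2*k+13) := by
      rw [show 2*(k+7) = (2*k+13)+1 from by ring]; exact (ueoe0_closed (2*k+13)).1
    obtain ⟨hu1, -, -, hu2, -, -⟩ := uo_div (2*k+12)
    rw [← h2n] at hu1 hu2
    obtain ⟨hv0, -, hv1, -, hv2, -⟩ := vw_div (2*(k+7))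
    have hdiv : ((2*(k+7))/2 : ℕ) = k+7 := by omega
    rw [hdiv] at hv0 hv1 hv2
    have l128 : (128:ℤ) = 2^7 := by norm_num
    have d1 : (2:ℤ)^7 ∣ ue1 (2*(k+7)) := dvd_trans (pow_dvd_pow 2 (by omega)) hu1
    have d2 : (2:ℤ)^7 ∣ ue2 (2*(k+7)) := dvd_trans (pow_dvd_pow 2 (by omega)) hu2
    have d0 : (2:ℤ)^7 ∣ ue0 (2*(k+7)) := by
      rw [hu0]; exact pow_dvd_pow 2 (by omega)
    have e0 : (2:ℤ)^7 ∣ ve0 (2*(k+7)) := dvd_trans (pow_dvd_pow 2 (by omega)) hv0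
    have e1 : (2:ℤ)^7 ∣ ve1 (2*(k+7)) := dvd_trans (pow_dvd_pow 2 (by omega)) hv1
    have e2 : (2:ℤ)^7 ∣ ve2 (2*(k+7)) := dvd_trans (pow_dvd_pow 2 (by omega)) hv2
    rw [l128]
    exact dvd_sub (dvd_add (dvd_add (dvd_add (dvd_sub (Dvd.dvd.mul_left d2 2)
      (Dvd.dvd.mul_left d1 17)) (Dvd.dvd.mul_left d0 21)) e2) (Dvd.dvd.mul_left e1 6))
      (Dvd.dvd.mul_left e0 20)

lemma euler_key : ∀ m : ℕ, ((eulerE (2*m) : ZMod 128)) = ((Qe m : ℤ) : ZMod 128) := by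
  intro m
  induction m using Nat.strong_induction_on with
  | _ m ih =>
    match m with
    | 0 =>
      rw [show 2*0 = 0 from rfl, eulerE, Qe]
      decide
    | (k+1) =>
      have hunf : eulerE (2*(k+1)) =
          -∑ r ∈ (Finset.range (k + 1)).attach,
            ((2*k + 2).choose (2 * r.1) : ℤ) * eulerE (2 * r.1) := by
        rw [show 2*(k+1) = 2*k+2 from by ring, eulerE, if_pos (even_two_mul k)]
        have h : 2*k/2 = k := by omega
        rw [h]
      rw [hunf]
      rw [show ∑ r ∈ (Finset.range (k + 1)).attach,
            ((2*k + 2).choose (2 * r.1) : ℤ) * eulerE (2 * r.1)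
          = ∑ r ∈ Finset.range (k + 1), ((2*k + 2).choose (2 * r) : ℤ) * eulerE (2 * r)
          from Finset.sum_attach (Finset.range (k+1)) (fun r => ((2*k + 2).choose (2 * r) : ℤ) * eulerE (2 * r))]
      have hkey := keyDvd (k+1) (by omega)
      have hz : ((∑ r ∈ Finset.range (k+2), ((2*(k+1)).choose (2*r) : ℤ) * Qe r : ℤ) : ZMod 128) = 0 := by
        exact_mod_cast (ZMod.intCast_zmod_eq_zero_iff_dvd _ 128).mpr hkey
      rw [Finset.sum_range_succ] at hz
      rw [show 2*(k+1) = 2*(k+1) from rfl, Nat.choose_self] at hz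
      push_cast at hz ⊢
      have hcongr : ∑ r ∈ Finset.range (k + 1), ((2*k + 2).choose (2 * r) : ZMod 128) * ((eulerE (2 * r) : ℤ) : ZMod 128)
          = ∑ r ∈ Finset.range (k + 1), ((2*k + 2).choose (2 * r) : ZMod 128) * ((Qe r : ℤ) : ZMod 128) := by
        refine Finset.sum_congr rfl fun r hr => ?_
        rw [ih r (by simpa using hr)]
      rw [show (2*(k+1)) = 2*k+2 from by ring] at hz
      rw [hcongr]
      push_cast at hz
      linear_combination -hz

theorem eulerE_mod_128 (b : ℕ) (hb : Even b) :
    (4 ∣ b → eulerE b ≡ 3 * (b : ℤ) ^ 2 - 11 * b + 1 [ZMOD 2 ^ 7]) ∧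
    ((4 : ℤ) ∣ ((b : ℤ) - 2) → eulerE b ≡ (b : ℤ) ^ 2 - 23 * b + 41 [ZMOD 2 ^ 7]) := by
  obtain ⟨m, rfl⟩ := hb
  rw [show m + m = 2*m from (two_mul m).symm]
  have hz := euler_key m
  have hdvd : (2^7 : ℤ) ∣ (Qe m - eulerE (2*m)) := by
    have h0 : (((Qe m - eulerE (2*m)) : ℤ) : ZMod 128) = 0 := by
      push_cast
      rw [hz]; ring
    have h1 := (ZMod.intCast_zmod_eq_zero_iff_dvd _ 128).mp h0
    rw [show ((2:ℤ)^7) = ((128:ℕ):ℤ) by norm_num]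
    exact h1
  constructor
  · intro h4
    have hm : Even m := by
      obtain ⟨t, ht⟩ := h4
      exact ⟨t, by omega⟩
    have hQ : Qe m = 3 * ((2*m : ℕ) : ℤ)^2 - 11 * ((2*m:ℕ):ℤ) + 1 := by
      rw [Qe, if_pos hm]; push_cast; ring
    rw [← hQ]
    exact Int.modEq_iff_dvd.mpr hdvd
  · intro h4
    have hm : ¬ Even m := by
      rintro ⟨s, rfl⟩
      obtain ⟨t, ht⟩ := h4
      push_cast at ht
      omega
    have hQ : Qe m = ((2*m : ℕ) : ℤ)^2 - 23 * ((2*m:ℕ):ℤ) + 41 := by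
      rw [Qe, if_neg hm]; push_cast; ring
    rw [← hQ]
    exact Int.modEq_iff_dvd.mpr hdvd
end
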